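/- arXiv:2004.14697 — 5 statements merged into one kernel-verified Lean document; each statement's English description precedes it below -/
import Mathlib

section
/- Let P ⊆ ℝ^n be a compact convex set with nonempty interior and u : int P → ℝ a smooth function whose Hessian matrix is positive definite at every point of int P. Set V = (det Hess u)^{-1/2} on int P (so V > 0 on int P), and suppose V extends to a continuous function on P vanishing at every point of ∂P. If at every critical point x of V in int P the ordinary Hessian matrix of log V at x is negative definite, then V has exactly one critical point in int P. -/
open Real Set Topology Filter Matrix

/-- `i`-th partial derivative of a function on `ℝⁿ`. -/
noncomputable def pd {n : ℕ} (i : Fin n) (f : (Fin n → ℝ) → ℝ) : (Fin n → ℝ) → ℝ :=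
  fun x => fderiv ℝ f x (Pi.single i 1)

/-- Hessian matrix of a function on `ℝⁿ`. -/
noncomputable def Hess {n : ℕ} (u : (Fin n → ℝ) → ℝ) (x : Fin n → ℝ) :
    Matrix (Fin n) (Fin n) ℝ :=
  Matrix.of fun i j => pd i (pd j u) x

/-- The orbital volume function `V = (det Hess u)^(-1/2)`. -/
noncomputable def orbVol {n : ℕ} (u : (Fin n → ℝ) → ℝ) : (Fin n → ℝ) → ℝ :=
  fun x => (Hess u x).det ^ (-(1/2 : ℝ))

lemma smooth_pd {n : ℕ} {f : (Fin n → ℝ) → ℝ} {s : Set (Fin n → ℝ)} (hs : IsOpen s)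
    (hf : ContDiffOn ℝ (⊤ : ℕ∞) f s) (j : Fin n) : ContDiffOn ℝ (⊤ : ℕ∞) (pd j f) s := by
  have h1 : ContDiffOn ℝ (⊤ : ℕ∞) (fderiv ℝ f) s := by
    apply hf.fderiv_of_isOpen hs
    exact le_of_eq (by simp)
  exact (ContinuousLinearMap.apply ℝ ℝ (Pi.single j 1 : Fin n → ℝ)).contDiff.comp_contDiffOn h1

lemma smooth_det_hess {n : ℕ} {u : (Fin n → ℝ) → ℝ} {s : Set (Fin n → ℝ)} (hs : IsOpen s)
    (hu : ContDiffOn ℝ (⊤ : ℕ∞) u s) : ContDiffOn ℝ (⊤ : ℕ∞) (fun x => (Hess u x).det) s := by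
  have hij : ∀ i j : Fin n, ContDiffOn ℝ (⊤ : ℕ∞) (pd i (pd j u)) s :=
    fun i j => smooth_pd hs (smooth_pd hs hu j) i
  have : (fun x => (Hess u x).det)
      = fun x => ∑ σ : Equiv.Perm (Fin n), (Equiv.Perm.sign σ : ℤ) • ∏ i, Hess u x (σ i) i := by
    funext x; rw [Matrix.det_apply]; simp [Units.smul_def, zsmul_eq_mul]
  rw [this]
  apply ContDiffOn.sum
  intro σ _
  simp only [zsmul_eq_mul]
  exact ContDiffOn.mul contDiffOn_const (contDiffOn_prod fun i _ => hij (σ i) i)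

lemma orbVol_pos {n : ℕ} {u : (Fin n → ℝ) → ℝ} {x : Fin n → ℝ}
    (h : (Hess u x).PosDef) : 0 < orbVol u x :=
  Real.rpow_pos_of_pos h.det_pos _

lemma smooth_orbVol {n : ℕ} {u : (Fin n → ℝ) → ℝ} {s : Set (Fin n → ℝ)} (hs : IsOpen s)
    (hu : ContDiffOn ℝ (⊤ : ℕ∞) u s) (hpos : ∀ x ∈ s, (Hess u x).PosDef) :
    ContDiffOn ℝ (⊤ : ℕ∞) (orbVol u) s := by
  intro x hx
  have hdet : ContDiffAt ℝ (⊤ : ℕ∞) (fun x => (Hess u x).det) x :=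
    (smooth_det_hess hs hu x hx).contDiffAt (hs.mem_nhds hx)
  have hne : (Hess u x).det ≠ 0 := ne_of_gt (hpos x hx).det_pos
  exact ((Real.contDiffAt_rpow_const_of_ne hne).comp x hdet).contDiffWithinAt

lemma smooth_logOrbVol {n : ℕ} {u : (Fin n → ℝ) → ℝ} {s : Set (Fin n → ℝ)} (hs : IsOpen s)
    (hu : ContDiffOn ℝ (⊤ : ℕ∞) u s) (hpos : ∀ x ∈ s, (Hess u x).PosDef) :
    ContDiffOn ℝ (⊤ : ℕ∞) (fun y => Real.log (orbVol u y)) s := by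
  intro x hx
  have hV : ContDiffAt ℝ (⊤ : ℕ∞) (orbVol u) x :=
    (smooth_orbVol hs hu hpos x hx).contDiffAt (hs.mem_nhds hx)
  exact ((Real.contDiffAt_log.2 (ne_of_gt (orbVol_pos (hpos x hx)))).comp x hV).contDiffWithinAt

/-- quadratic form of a matrix -/
def quadForm {n : ℕ} (H : Matrix (Fin n) (Fin n) ℝ) (v : Fin n → ℝ) : ℝ :=
  ∑ j, ∑ i, v i * v j * H i j

lemma quadForm_smul {n : ℕ} (H : Matrix (Fin n) (Fin n) ℝ) (c : ℝ) (v : Fin n → ℝ) :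
    quadForm H (c • v) = c ^ 2 * quadForm H v := by
  simp only [quadForm, Finset.mul_sum]
  refine Finset.sum_congr rfl fun j _ => Finset.sum_congr rfl fun i _ => ?_
  simp [Pi.smul_apply, smul_eq_mul]; ring

lemma quadForm_neg_of_posDef {n : ℕ} {H : Matrix (Fin n) (Fin n) ℝ} (h : (-H).PosDef)
    {v : Fin n → ℝ} (hv : v ≠ 0) : quadForm H v < 0 := by
  have h2 := (Matrix.posDef_iff_dotProduct_mulVec.mp h).2 hv
  have : dotProduct (star v) ((-H) *ᵥ v) = -quadForm H v := by
    simp only [quadForm, dotProduct, Matrix.mulVec, Matrix.neg_apply, star_trivial,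
      dotProduct, Finset.mul_sum, ← Finset.sum_neg_distrib]
    rw [Finset.sum_comm]
    refine Finset.sum_congr rfl fun j _ => Finset.sum_congr rfl fun i _ => ?_
    ring
  rw [this] at h2
  linarith

lemma clm_eval_eq_sum {n : ℕ} (L : (Fin n → ℝ) →L[ℝ] ℝ) (v : Fin n → ℝ) :
    L v = ∑ j, v j * L (Pi.single j 1) := by
  have hv : v = ∑ j, (v j) • (Pi.single j 1 : Fin n → ℝ) := by
    have := Finset.univ_sum_single v
    rw [← this]
    refine Finset.sum_congr rfl fun j _ => ?_
    ext k
    by_cases h : j = k <;> simp [Pi.single_apply, h]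
  conv_lhs => rw [hv]
  rw [map_sum]
  refine Finset.sum_congr rfl fun j _ => ?_
  rw [L.map_smul, smul_eq_mul]

lemma hasDerivAt_line {n : ℕ} {f : (Fin n → ℝ) → ℝ} {p v : Fin n → ℝ} {t : ℝ}
    (hdiff : DifferentiableAt ℝ f (p + t • v)) :
    HasDerivAt (fun s : ℝ => f (p + s • v)) (fderiv ℝ f (p + t • v) v) t := by
  have hcurve : HasDerivAt (fun s : ℝ => p + s • v) v t := by
    simpa using ((hasDerivAt_id t).smul_const v).const_add p
  exact hdiff.hasFDerivAt.comp_hasDerivAt t hcurve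

lemma uniform_neg {n : ℕ} (hn : 0 < n) {f : (Fin n → ℝ) → ℝ} {s : Set (Fin n → ℝ)}
    (hs : IsOpen s) (hf : ContDiffOn ℝ (⊤ : ℕ∞) f s) {z : Fin n → ℝ} (hz : z ∈ s)
    (hneg : (-(Hess f z)).PosDef) :
    ∃ ρ > 0, Metric.ball z ρ ⊆ s ∧
      ∀ x ∈ Metric.ball z ρ, ∀ v : Fin n → ℝ, v ≠ 0 → quadForm (Hess f x) v < 0 := by
  classical
  set S := Metric.sphere (0 : Fin n → ℝ) 1 with hS
  have hScomp : IsCompact S := isCompact_sphere 0 1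
  have hSne : S.Nonempty := by
    refine ⟨Pi.single ⟨0, hn⟩ 1, ?_⟩
    simp [hS, Pi.norm_single]
  have hQcont : Continuous fun v : Fin n → ℝ => quadForm (Hess f z) v := by
    apply continuous_finset_sum
    intro j _
    apply continuous_finset_sum
    intro i _
    exact ((continuous_apply i).mul (continuous_apply j)).mul continuous_const
  obtain ⟨v₀, hv₀S, hmin⟩ := hScomp.exists_isMaxOn hSne hQcont.continuousOn
  have hv₀ : v₀ ≠ 0 := by
    intro h
    rw [hS, mem_sphere_zero_iff_norm] at hv₀S
    simp [h] at hv₀S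
  set m : ℝ := -(quadForm (Hess f z) v₀) with hm
  have hmpos : 0 < m := by
    have := quadForm_neg_of_posDef hneg hv₀
    rw [hm]; linarith
  have hQz : ∀ v ∈ S, quadForm (Hess f z) v ≤ -m := by
    intro v hv
    have h := hmin hv
    rw [hm]
    simpa using h
  set ε : ℝ := m / (2 * (n : ℝ) ^ 2) with hε
  have hεpos : 0 < ε := by
    apply div_pos hmpos
    positivity
  have hev : ∀ᶠ x in 𝓝 z, (∀ i j : Fin n, |pd i (pd j f) x - pd i (pd j f) z| < ε) ∧ x ∈ s := by
    apply Filter.Eventually.and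
    · rw [Filter.eventually_all]
      intro i
      rw [Filter.eventually_all]
      intro j
      have hc : ContinuousAt (pd i (pd j f)) z :=
        (smooth_pd hs (smooth_pd hs hf j) i).continuousOn.continuousAt (hs.mem_nhds hz)
      have := hc (Metric.ball_mem_nhds (pd i (pd j f) z) hεpos)
      filter_upwards [this] with x hx
      rw [Set.mem_preimage, Metric.mem_ball, Real.dist_eq] at hx
      exact hx
    · exact hs.mem_nhds hz
  rw [Metric.eventually_nhds_iff_ball] at hev
  obtain ⟨ρ, hρpos, hρ⟩ := hev
  refine ⟨ρ, hρpos, fun x hx => (hρ x hx).2, ?_⟩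
  intro x hx v hv
  obtain ⟨hΔ, hxs⟩ := hρ x hx
  -- first: bound for unit vectors
  have hunit : ∀ w ∈ S, quadForm (Hess f x) w < 0 := by
    intro w hw
    have hwnorm : ‖w‖ = 1 := by rwa [hS, mem_sphere_zero_iff_norm] at hw
    have hbound : |quadForm (Hess f x) w - quadForm (Hess f z) w| ≤ m / 2 := by
      have hdiff : quadForm (Hess f x) w - quadForm (Hess f z) w
          = ∑ j, ∑ i, w i * w j * (pd i (pd j f) x - pd i (pd j f) z) := by
        simp only [quadForm, ← Finset.sum_sub_distrib]
        refine Finset.sum_congr rfl fun j _ => Finset.sum_congr rfl fun i _ => ?_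
        simp only [Hess, Matrix.of_apply]
        ring
      rw [hdiff]
      calc |∑ j, ∑ i, w i * w j * (pd i (pd j f) x - pd i (pd j f) z)|
          ≤ ∑ j, |∑ i, w i * w j * (pd i (pd j f) x - pd i (pd j f) z)| :=
            Finset.abs_sum_le_sum_abs _ _
        _ ≤ ∑ j : Fin n, ∑ i : Fin n, |w i * w j * (pd i (pd j f) x - pd i (pd j f) z)| :=
            Finset.sum_le_sum fun j _ => Finset.abs_sum_le_sum_abs _ _
        _ ≤ ∑ _j : Fin n, ∑ _i : Fin n, ε := by
            refine Finset.sum_le_sum fun j _ => Finset.sum_le_sum fun i _ => ?_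
            rw [abs_mul, abs_mul]
            have hwi : |w i| ≤ 1 := by
              have := norm_le_pi_norm w i
              rw [hwnorm] at this
              simpa using this
            have hwj : |w j| ≤ 1 := by
              have := norm_le_pi_norm w j
              rw [hwnorm] at this
              simpa using this
            have hΔij := le_of_lt (hΔ i j)
            have h1 : |w i| * |w j| ≤ 1 := by nlinarith [abs_nonneg (w i), abs_nonneg (w j)]
            calc |w i| * |w j| * |pd i (pd j f) x - pd i (pd j f) z|
                ≤ 1 * |pd i (pd j f) x - pd i (pd j f) z| :=
                  mul_le_mul_of_nonneg_right h1 (abs_nonneg _)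
              _ ≤ ε := by rw [one_mul]; exact hΔij
        _ = (n : ℝ) ^ 2 * ε := by
            simp [Finset.sum_const]
            ring
        _ = m / 2 := by
            rw [hε]
            field_simp
    have h1 : quadForm (Hess f x) w ≤ quadForm (Hess f z) w + m / 2 := by
      have := abs_le.1 hbound
      linarith [this.2]
    have h2 := hQz w hw
    linarith
  -- now scale
  have hvnorm : ‖v‖ ≠ 0 := norm_ne_zero_iff.2 hv
  set w := ‖v‖⁻¹ • v with hw
  have hwS : w ∈ S := by
    rw [hS, mem_sphere_zero_iff_norm, hw, norm_smul]
    simp [abs_of_nonneg (inv_nonneg.2 (norm_nonneg v)), inv_mul_cancel₀ hvnorm]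
  have hvw : v = ‖v‖ • w := by
    rw [hw, smul_smul, mul_inv_cancel₀ hvnorm, one_smul]
  rw [hvw, quadForm_smul]
  have := hunit w hwS
  have hn2 : 0 < ‖v‖ ^ 2 := by positivity
  nlinarith

lemma strictLocalMax_of_neg_hess {n : ℕ} (hn : 0 < n) {f : (Fin n → ℝ) → ℝ}
    {s : Set (Fin n → ℝ)} (hs : IsOpen s) (hf : ContDiffOn ℝ (⊤ : ℕ∞) f s)
    {z : Fin n → ℝ} (hz : z ∈ s) (hcrit : fderiv ℝ f z = 0)
    (hneg : (-(Hess f z)).PosDef) :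
    ∃ ρ > 0, Metric.ball z ρ ⊆ s ∧ ∀ y ∈ Metric.ball z ρ, y ≠ z → f y < f z := by
  obtain ⟨ρ, hρpos, hρs, hρneg⟩ := uniform_neg hn hs hf hz hneg
  refine ⟨ρ, hρpos, hρs, ?_⟩
  intro y hy hyz
  set v := y - z with hv
  have hvne : v ≠ 0 := sub_ne_zero.2 hyz
  have hseg : ∀ t ∈ Icc (0:ℝ) 1, z + t • v ∈ Metric.ball z ρ := by
    intro t ht
    rw [Metric.mem_ball, dist_eq_norm]
    have : ‖z + t • v - z‖ = |t| * ‖v‖ := by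
      rw [add_sub_cancel_left, norm_smul, Real.norm_eq_abs]
    rw [this]
    have hvy : ‖v‖ < ρ := by
      rw [hv, ← dist_eq_norm]
      exact Metric.mem_ball.1 hy
    have h1 : |t| ≤ 1 := by
      rw [abs_le]; constructor <;> [linarith [ht.1]; exact ht.2]
    nlinarith [norm_nonneg v]
  have hsegs : ∀ t ∈ Icc (0:ℝ) 1, z + t • v ∈ s := fun t ht => hρs (hseg t ht)
  set g : ℝ → ℝ := fun t => f (z + t • v) with hg
  set φ : ℝ → ℝ := fun t => ∑ j, v j * pd j f (z + t • v) with hφdef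
  have hgderiv : ∀ t ∈ Icc (0:ℝ) 1, HasDerivAt g (φ t) t := by
    intro t ht
    have hxs := hsegs t ht
    have hdiff : DifferentiableAt ℝ f (z + t • v) :=
      ((hf (z + t • v) hxs).contDiffAt (hs.mem_nhds hxs)).differentiableAt (by simp)
    have h1 := hasDerivAt_line (p := z) (v := v) (t := t) hdiff
    have h2 : fderiv ℝ f (z + t • v) v = φ t := by
      rw [clm_eval_eq_sum]
      rfl
    rwa [h2] at h1
  have hφderiv : ∀ t ∈ Icc (0:ℝ) 1,
      HasDerivAt φ (quadForm (Hess f (z + t • v)) v) t := by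
    intro t ht
    have hxs := hsegs t ht
    have hsum : HasDerivAt φ (∑ j, v j * (fderiv ℝ (pd j f) (z + t • v) v)) t := by
      apply HasDerivAt.fun_sum
      intro j _
      apply HasDerivAt.const_mul
      have hdiff : DifferentiableAt ℝ (pd j f) (z + t • v) :=
        ((smooth_pd hs hf j (z + t • v) hxs).contDiffAt
          (hs.mem_nhds hxs)).differentiableAt (by simp)
      exact hasDerivAt_line hdiff
    have heq : (∑ j, v j * (fderiv ℝ (pd j f) (z + t • v) v))
        = quadForm (Hess f (z + t • v)) v := by
      simp only [quadForm]
      refine Finset.sum_congr rfl fun j _ => ?_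
      rw [clm_eval_eq_sum, Finset.mul_sum]
      refine Finset.sum_congr rfl fun i _ => ?_
      simp only [Hess, Matrix.of_apply]
      show v j * (v i * pd i (pd j f) (z + t • v)) = _
      ring
    rwa [heq] at hsum
  have hφ0 : φ 0 = 0 := by
    simp only [hφdef]
    have h0 : ∀ j : Fin n, pd j f z = 0 := by
      intro j
      simp only [pd, hcrit]
      rfl
    simp [h0]
  obtain ⟨τ, hτ, hτslope⟩ := exists_hasDerivAt_eq_slope g φ one_pos
    (fun t ht => (hgderiv t ht).continuousAt.continuousWithinAt)
    (fun t ht => hgderiv t ⟨le_of_lt ht.1, le_of_lt ht.2⟩)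
  have hτ01 : τ ∈ Icc (0:ℝ) 1 := ⟨le_of_lt hτ.1, le_of_lt hτ.2⟩
  obtain ⟨σ, hσ, hσslope⟩ := exists_hasDerivAt_eq_slope φ
    (fun t => quadForm (Hess f (z + t • v)) v) hτ.1
    (fun t ht => (hφderiv t ⟨ht.1, le_trans ht.2 hτ01.2⟩).continuousAt.continuousWithinAt)
    (fun t ht => hφderiv t ⟨le_of_lt ht.1, le_trans (le_of_lt ht.2) hτ01.2⟩)
  have hσ01 : σ ∈ Icc (0:ℝ) 1 := ⟨le_of_lt hσ.1, le_trans (le_of_lt hσ.2) hτ01.2⟩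
  have hQneg : quadForm (Hess f (z + σ • v)) v < 0 := hρneg _ (hseg σ hσ01) v hvne
  rw [hφ0, sub_zero] at hσslope
  have hφτ : φ τ < 0 := by
    rw [sub_zero, eq_div_iff (ne_of_gt hτ.1)] at hσslope
    rw [← hσslope]
    exact mul_neg_of_neg_of_pos hQneg hτ.1
  have hgval : g 1 - g 0 = φ τ := by
    rw [hτslope]; ring
  have hg1 : g 1 = f y := by
    simp only [hg, one_smul, hv]
    norm_num
  have hg0 : g 0 = f z := by simp [hg]
  rw [hg1, hg0] at hgval
  linarith

lemma orbVol_strictLocalMax {n : ℕ} (hn : 0 < n) {u : (Fin n → ℝ) → ℝ} {s : Set (Fin n → ℝ)}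
    (hs : IsOpen s) (hu : ContDiffOn ℝ (⊤ : ℕ∞) u s) (hpos : ∀ x ∈ s, (Hess u x).PosDef)
    {z : Fin n → ℝ} (hz : z ∈ s) (hcrit : fderiv ℝ (orbVol u) z = 0)
    (hneg : (-(Hess (fun y => Real.log (orbVol u y)) z)).PosDef) :
    ∃ ρ > 0, Metric.ball z ρ ⊆ s ∧
      ∀ y ∈ Metric.ball z ρ, y ≠ z → orbVol u y < orbVol u z := by
  have hVsm : ContDiffOn ℝ (⊤ : ℕ∞) (orbVol u) s := smooth_orbVol hs hu hpos
  have hlogsm : ContDiffOn ℝ (⊤ : ℕ∞) (fun y => Real.log (orbVol u y)) s :=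
    smooth_logOrbVol hs hu hpos
  have hVdiff : DifferentiableAt ℝ (orbVol u) z :=
    ((hVsm z hz).contDiffAt (hs.mem_nhds hz)).differentiableAt (by simp)
  have hVfd : HasFDerivAt (orbVol u) (0 : (Fin n → ℝ) →L[ℝ] ℝ) z := by
    have := hVdiff.hasFDerivAt
    rwa [hcrit] at this
  have hlog : HasDerivAt Real.log (orbVol u z)⁻¹ (orbVol u z) :=
    Real.hasDerivAt_log (ne_of_gt (orbVol_pos (hpos z hz)))
  have hcompfd : HasFDerivAt (fun y => Real.log (orbVol u y)) (0 : (Fin n → ℝ) →L[ℝ] ℝ) z := by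
    have := hlog.hasFDerivAt.comp z hVfd
    simp at this; exact this
  have hlogcrit : fderiv ℝ (fun y => Real.log (orbVol u y)) z = 0 := hcompfd.fderiv
  obtain ⟨ρ, hρpos, hρs, hρmax⟩ :=
    strictLocalMax_of_neg_hess hn hs hlogsm hz hlogcrit hneg
  refine ⟨ρ, hρpos, hρs, ?_⟩
  intro y hy hyz
  have hlt := hρmax y hy hyz
  exact (Real.log_lt_log_iff (orbVol_pos (hpos y (hρs hy)))
    (orbVol_pos (hpos z hz))).1 hlt

lemma compact_component_separation {X : Type*} [MetricSpace X] {F : Set X} (hF : IsCompact F)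
    {a b : X} (ha : a ∈ F) (hb : b ∈ F) (hnb : b ∉ connectedComponentIn F a) :
    ∃ Ua Ub : Set X, IsOpen Ua ∧ IsOpen Ub ∧ Disjoint Ua Ub ∧ F ⊆ Ua ∪ Ub ∧
      a ∈ Ua ∧ b ∈ Ub := by
  have hcs : CompactSpace F := isCompact_iff_compactSpace.1 hF
  set a' : F := ⟨a, ha⟩
  set b' : F := ⟨b, hb⟩
  have hb' : b' ∉ connectedComponent a' := by
    intro h
    apply hnb
    rw [connectedComponentIn_eq_image ha]
    exact ⟨b', h, rfl⟩
  rw [connectedComponent_eq_iInter_isClopen] at hb'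
  rw [Set.mem_iInter] at hb'
  push_neg at hb'
  obtain ⟨⟨Z, hZclopen, haZ⟩, hbZ⟩ := hb'
  have hZcomp : IsCompact (Subtype.val '' Z) :=
    (hZclopen.1.isCompact).image continuous_subtype_val
  have hZccomp : IsCompact (Subtype.val '' Zᶜ) :=
    ((hZclopen.2.isClosed_compl).isCompact).image continuous_subtype_val
  have hdisj : Disjoint (Subtype.val '' Z) (Subtype.val '' Zᶜ) := by
    rw [Set.disjoint_iff]
    rintro x ⟨⟨p, hpZ, rfl⟩, ⟨q, hqZ, hqp⟩⟩
    have : q = p := Subtype.val_injective hqp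
    rw [this] at hqZ
    exact hqZ hpZ
  obtain ⟨δ, hδpos, hδdisj⟩ := hdisj.exists_thickenings hZcomp hZccomp.isClosed
  refine ⟨Metric.thickening δ (Subtype.val '' Z), Metric.thickening δ (Subtype.val '' Zᶜ),
    Metric.isOpen_thickening, Metric.isOpen_thickening, hδdisj, ?_, ?_, ?_⟩
  · intro x hx
    by_cases h : (⟨x, hx⟩ : F) ∈ Z
    · exact Or.inl (Metric.self_subset_thickening hδpos _ ⟨⟨x, hx⟩, h, rfl⟩)
    · exact Or.inr (Metric.self_subset_thickening hδpos _ ⟨⟨x, hx⟩, h, rfl⟩)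
  · exact Metric.self_subset_thickening hδpos _ ⟨a', haZ, rfl⟩
  · exact Metric.self_subset_thickening hδpos _ ⟨b', hbZ, rfl⟩

lemma singleton_clopen_contra {n : ℕ} {K : Set (Fin n → ℝ)} (hK : IsPreconnected K)
    {z b' : Fin n → ℝ} (hzK : z ∈ K) (hbK : b' ∈ K) (hne : b' ≠ z) {ρ : ℝ} (hρ : 0 < ρ)
    (hmax : ∀ y ∈ Metric.ball z ρ, y ≠ z → y ∉ K) : False := by
  obtain ⟨y, hyK, hyb, hyne⟩ := hK (Metric.ball z ρ) ({z}ᶜ) Metric.isOpen_ball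
    isOpen_compl_singleton
    (fun x _ => by
      by_cases h : x = z
      · exact Or.inl (h ▸ Metric.mem_ball_self hρ)
      · exact Or.inr h)
    ⟨z, hzK, Metric.mem_ball_self hρ⟩ ⟨b', hbK, hne⟩
  exact hmax y hyb hyne hyK

set_option maxHeartbeats 2000000 in
theorem stmt1 (n : ℕ) (P : Set (Fin n → ℝ)) (hP : IsCompact P) (hPconv : Convex ℝ P)
    (hPint : (interior P).Nonempty)
    (u Vbar : (Fin n → ℝ) → ℝ)
    (hu : ContDiffOn ℝ (⊤ : ℕ∞) u (interior P))
    (hpos : ∀ x ∈ interior P, (Hess u x).PosDef)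
    (hVc : ContinuousOn Vbar P)
    (hVagree : ∀ x ∈ interior P, Vbar x = orbVol u x)
    (hVbd : ∀ x ∈ frontier P, Vbar x = 0)
    (hneg : ∀ x ∈ interior P, fderiv ℝ (orbVol u) x = 0 →
      (-(Hess (fun y => Real.log (orbVol u y)) x)).PosDef) :
    ∃! x, x ∈ interior P ∧ fderiv ℝ (orbVol u) x = 0 := by
  classical
  rcases Nat.eq_zero_or_pos n with hn0 | hn
  · -- trivial case `n = 0`
    subst hn0
    obtain ⟨x, hx⟩ := hPint
    have hss : Subsingleton (Fin 0 → ℝ) := ⟨fun f g => funext fun i => i.elim0⟩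
    refine ⟨x, ⟨hx, ?_⟩, fun y _ => Subsingleton.elim y x⟩
    have hconst : orbVol u = fun _ => orbVol u x := funext fun y => by
      rw [Subsingleton.elim y x]
    rw [hconst]
    exact fderiv_const_apply _
  -- main case
  have hIo : IsOpen (interior P) := isOpen_interior
  have hVsm : ContDiffOn ℝ (⊤ : ℕ∞) (orbVol u) (interior P) := smooth_orbVol hIo hu hpos
  have hVposP : ∀ x ∈ interior P, 0 < Vbar x := by
    intro x hx
    rw [hVagree x hx]
    exact orbVol_pos (hpos x hx)
  have hVzero_out : ∀ x ∈ P, x ∉ interior P → Vbar x = 0 := by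
    intro x hx hnx
    apply hVbd
    rw [frontier, hP.isClosed.closure_eq]
    exact ⟨hx, hnx⟩
  set D : ℝ → Set (Fin n → ℝ) := fun t => P ∩ Vbar ⁻¹' Ici t with hDdef
  have hmemDiff : ∀ t x, x ∈ D t ↔ x ∈ P ∧ t ≤ Vbar x := by
    intro t x
    simp [hDdef]
  have hDclosed : ∀ t, IsClosed (D t) :=
    fun t => hVc.preimage_isClosed_of_isClosed hP.isClosed isClosed_Ici
  have hDcomp : ∀ t, IsCompact (D t) :=
    fun t => hP.of_isClosed_subset (hDclosed t) Set.inter_subset_left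
  have hDsubI : ∀ t, 0 < t → D t ⊆ interior P := by
    intro t ht x hx
    rw [hmemDiff] at hx
    by_contra hnx
    have := hVzero_out x hx.1 hnx
    rw [this] at hx
    linarith [hx.2]
  have hDanti : ∀ {t t' : ℝ}, t ≤ t' → D t' ⊆ D t := by
    intro t t' htt x hx
    rw [hmemDiff] at hx ⊢
    exact ⟨hx.1, le_trans htt hx.2⟩
  have hslm : ∀ z ∈ interior P, fderiv ℝ (orbVol u) z = 0 →
      ∃ ρ > 0, Metric.ball z ρ ⊆ interior P ∧
        ∀ y ∈ Metric.ball z ρ, y ≠ z → orbVol u y < orbVol u z :=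
    fun z hz hc => orbVol_strictLocalMax hn hIo hu hpos hz hc (hneg z hz hc)
  -- uniqueness
  have key : ∀ a, a ∈ interior P → fderiv ℝ (orbVol u) a = 0 →
      ∀ b, b ∈ interior P → fderiv ℝ (orbVol u) b = 0 → b = a := by
    intro a haI hca b hbI hcb
    by_contra hab
    set T : Set ℝ := {t | 0 < t ∧ b ∈ connectedComponentIn (D t) a} with hTdef
    have hsegsubI : segment ℝ a b ⊆ interior P := hPconv.interior.segment_subset haI hbI
    have hsegcomp : IsCompact (segment ℝ a b) := by
      rw [segment_eq_image ℝ a b]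
      exact isCompact_Icc.image
        (((continuous_const.sub continuous_id).smul continuous_const).add
          (continuous_id.smul continuous_const))
    have hsegne : (segment ℝ a b).Nonempty := ⟨a, left_mem_segment ℝ a b⟩
    obtain ⟨w₀, hw₀seg, hw₀min⟩ := hsegcomp.exists_isMinOn hsegne
      (hVc.mono (hsegsubI.trans interior_subset))
    set t₀ := Vbar w₀ with ht₀def
    have ht₀pos : 0 < t₀ := hVposP w₀ (hsegsubI hw₀seg)
    have hsegD : segment ℝ a b ⊆ D t₀ := by
      intro x hx
      rw [hmemDiff]
      exact ⟨interior_subset (hsegsubI hx), hw₀min hx⟩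
    have ht₀T : t₀ ∈ T := by
      refine ⟨ht₀pos, ?_⟩
      exact (convex_segment a b).isPreconnected.subset_connectedComponentIn
        (left_mem_segment ℝ a b) hsegD (right_mem_segment ℝ a b)
    have hTne : T.Nonempty := ⟨t₀, ht₀T⟩
    have hmemD : ∀ t ∈ T, a ∈ D t ∧ b ∈ D t := by
      intro t ht
      have hbmem := ht.2
      have haD : a ∈ D t := by
        by_contra h
        rw [connectedComponentIn_eq_empty h] at hbmem
        exact hbmem
      exact ⟨haD, connectedComponentIn_subset _ _ hbmem⟩
    have hTbdd : BddAbove T := ⟨Vbar a, fun t ht => ((hmemDiff t a).1 (hmemD t ht).1).2⟩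
    obtain ⟨c, hcdef⟩ : ∃ c : ℝ, c = sSup T := ⟨_, rfl⟩
    have ht₀c : t₀ ≤ c := by
      rw [hcdef]
      exact le_csSup hTbdd ht₀T
    have hcpos : 0 < c := lt_of_lt_of_le ht₀pos ht₀c
    have hcleA : c ≤ Vbar a := by
      rw [hcdef]
      exact csSup_le hTne fun t ht => ((hmemDiff t a).1 (hmemD t ht).1).2
    have hcleB : c ≤ Vbar b := by
      rw [hcdef]
      exact csSup_le hTne fun t ht => ((hmemDiff t b).1 (hmemD t ht).2).2
    have haDc : a ∈ D c := (hmemDiff c a).2 ⟨interior_subset haI, hcleA⟩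
    have hbDc : b ∈ D c := (hmemDiff c b).2 ⟨interior_subset hbI, hcleB⟩
    have hbKc : b ∈ connectedComponentIn (D c) a := by
      by_contra hnb
      obtain ⟨Ua, Ub, hUao, hUbo, hUdisj, hcov, haUa, hbUb⟩ :=
        compact_component_separation (hDcomp c) haDc hbDc hnb
      have hsub : ∃ k : ℕ, D (c - c / (k + 2)) ⊆ Ua ∪ Ub := by
        by_contra hno
        push_neg at hno
        set G : ℕ → Set (Fin n → ℝ) := fun k => D (c - c / (k + 2)) ∩ (Ua ∪ Ub)ᶜ with hGdef
        have hGne : ∀ k, (G k).Nonempty := by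
          intro k
          obtain ⟨x, hx1, hx2⟩ := Set.not_subset.1 (hno k)
          exact ⟨x, hx1, hx2⟩
        have hGcomp : ∀ k, IsCompact (G k) :=
          fun k => (hDcomp _).inter_right (hUao.union hUbo).isClosed_compl
        have hGmono : ∀ j k : ℕ, j ≤ k → G k ⊆ G j := by
          intro j k hjk
          apply Set.inter_subset_inter_left
          apply hDanti
          have h2 : (0:ℝ) < (j:ℝ) + 2 := by positivity
          have h3 : ((j:ℝ) + 2) ≤ ((k:ℝ) + 2) := by
            have : (j:ℝ) ≤ (k:ℝ) := Nat.cast_le.2 hjk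
            linarith
          have := div_le_div_of_nonneg_left (le_of_lt hcpos) h2 h3
          linarith [this]
        have hGdir : Directed (· ⊇ ·) G := fun j k =>
          ⟨max j k, hGmono j (max j k) (le_max_left j k), hGmono k (max j k) (le_max_right j k)⟩
        obtain ⟨x, hx⟩ := IsCompact.nonempty_iInter_of_directed_nonempty_isCompact_isClosed
          G hGdir hGne hGcomp (fun k => (hGcomp k).isClosed)
        rw [Set.mem_iInter] at hx
        have hxDc : x ∈ D c := by
          have hxP : x ∈ P := ((hmemDiff _ x).1 (hx 0).1).1
          rw [hmemDiff]
          refine ⟨hxP, ?_⟩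
          by_contra hlt
          push_neg at hlt
          have h1 : 0 < c - Vbar x := by linarith
          obtain ⟨k, hk⟩ := exists_nat_gt (c / (c - Vbar x))
          have h2 : c / ((k:ℝ) + 2) < c - Vbar x := by
            rw [div_lt_iff₀ (by positivity)]
            calc c = (c / (c - Vbar x)) * (c - Vbar x) := by field_simp
              _ < ((k:ℝ) + 2) * (c - Vbar x) := by
                  apply mul_lt_mul_of_pos_right _ h1
                  linarith
              _ = (c - Vbar x) * ((k:ℝ) + 2) := by ring
          have h3 := ((hmemDiff _ x).1 (hx k).1).2
          linarith
        exact (hx 0).2 (hcov hxDc)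
      obtain ⟨k, hk⟩ := hsub
      set ε := c / ((k:ℝ) + 2) with hεdef
      have hεpos : 0 < ε := by positivity
      have hεlt : c - ε < c := by linarith
      obtain ⟨t, htT, htgt⟩ := exists_lt_of_lt_csSup hTne (show c - ε < sSup T from hcdef ▸ hεlt)
      have hsubUV : connectedComponentIn (D t) a ⊆ Ua ∪ Ub :=
        (connectedComponentIn_subset _ _).trans ((hDanti (le_of_lt htgt)).trans hk)
      obtain ⟨y, _, hyUaUb⟩ := isPreconnected_connectedComponentIn Ua Ub hUao hUbo hsubUV
        ⟨a, mem_connectedComponentIn (hmemD t htT).1, haUa⟩ ⟨b, htT.2, hbUb⟩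
      exact Set.disjoint_left.1 hUdisj hyUaUb.1 hyUaUb.2
    set K := connectedComponentIn (D c) a with hKdef
    have hKpre : IsPreconnected K := isPreconnected_connectedComponentIn
    have haK : a ∈ K := mem_connectedComponentIn haDc
    have hKD : K ⊆ D c := connectedComponentIn_subset _ _
    have hKI : K ⊆ interior P := hKD.trans (hDsubI c hcpos)
    have hcltA : c < Vbar a := by
      rcases lt_or_eq_of_le hcleA with h | h
      · exact h
      exfalso
      obtain ⟨ρ, hρpos, hρI, hρmax⟩ := hslm a haI hca
      refine singleton_clopen_contra hKpre haK hbKc hab hρpos ?_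
      intro y hy hyne hyK
      have hyI : y ∈ interior P := hKI hyK
      have h1 : Vbar y < Vbar a := by
        rw [hVagree y hyI, hVagree a haI]
        exact hρmax y hy hyne
      have h2 : c ≤ Vbar y := ((hmemDiff c y).1 (hKD hyK)).2
      rw [← h] at h1
      linarith
    have hcltB : c < Vbar b := by
      rcases lt_or_eq_of_le hcleB with h | h
      · exact h
      exfalso
      obtain ⟨ρ, hρpos, hρI, hρmax⟩ := hslm b hbI hcb
      refine singleton_clopen_contra hKpre hbKc haK (Ne.symm hab) hρpos ?_
      intro y hy hyne hyK
      have hyI : y ∈ interior P := hKI hyK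
      have h1 : Vbar y < Vbar b := by
        rw [hVagree y hyI, hVagree b hbI]
        exact hρmax y hy hyne
      have h2 : c ≤ Vbar y := ((hmemDiff c y).1 (hKD hyK)).2
      rw [← h] at h1
      linarith
    set U : Set (Fin n → ℝ) := {x | x ∈ interior P ∧ c < Vbar x} with hUdef
    have hUopen : IsOpen U := by
      rw [isOpen_iff_mem_nhds]
      rintro x ⟨hxI, hxc⟩
      have hcont : ContinuousAt Vbar x :=
        hVc.continuousAt (Filter.mem_of_superset (hIo.mem_nhds hxI) interior_subset)
      have h1 : Vbar ⁻¹' Ioi c ∈ 𝓝 x := hcont (isOpen_Ioi.mem_nhds hxc)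
      have h2 : interior P ∈ 𝓝 x := hIo.mem_nhds hxI
      filter_upwards [h1, h2] with y hy1 hy2
      exact ⟨hy2, hy1⟩
    have hUI : U ⊆ interior P := fun x hx => hx.1
    have haU : a ∈ U := ⟨haI, hcltA⟩
    have hbU : b ∈ U := ⟨hbI, hcltB⟩
    set A := connectedComponentIn U a with hAdef
    have hAopen : IsOpen A := hUopen.connectedComponentIn
    have hApre : IsPreconnected A := isPreconnected_connectedComponentIn
    have hAU : A ⊆ U := connectedComponentIn_subset _ _
    have haA : a ∈ A := mem_connectedComponentIn haU
    have habsorb : ∀ S : Set (Fin n → ℝ), IsPreconnected S → S ⊆ U →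
        (S ∩ A).Nonempty → S ⊆ A := by
      rintro S hS hSU ⟨p, hpS, hpA⟩
      have hpre : IsPreconnected (A ∪ S) := hApre.union' ⟨p, hpA, hpS⟩ hS
      have hsubA : A ∪ S ⊆ A :=
        hpre.subset_connectedComponentIn (Or.inl haA) (Set.union_subset hAU hSU)
      exact Set.subset_union_right.trans hsubA
    have hclosA : ∀ x, x ∈ closure A → x ∈ U → x ∈ A := by
      intro x hx hxU
      have hpre : IsPreconnected (insert x A) :=
        hApre.subset_closure (Set.subset_insert x A)
          (Set.insert_subset_iff.2 ⟨hx, subset_closure⟩)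
      have hsub : insert x A ⊆ A := hpre.subset_connectedComponentIn
        (Set.mem_insert_iff.2 (Or.inr haA)) (Set.insert_subset_iff.2 ⟨hxU, hAU⟩)
      exact hsub (Set.mem_insert x A)
    have hloc : ∀ w, (w ∈ K ∧ w ∈ closure A) →
        ∃ r > 0, ∀ p ∈ Metric.ball w r, p ∈ K → p ∈ closure A := by
      rintro w ⟨hwK, hwcl⟩
      by_cases hwU : w ∈ U
      · have hwA : w ∈ A := hclosA w hwcl hwU
        obtain ⟨r, hrpos, hr⟩ := Metric.isOpen_iff.1 hAopen w hwA
        exact ⟨r, hrpos, fun p hp _ => subset_closure (hr hp)⟩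
      · have hwD := hKD hwK
        have hwI : w ∈ interior P := hKI hwK
        have hwc : Vbar w = c := by
          have h1 : ¬ c < Vbar w := fun h => hwU ⟨hwI, h⟩
          have h2 : c ≤ Vbar w := ((hmemDiff c w).1 hwD).2
          linarith [not_lt.1 h1]
        have hane : a ≠ w := by
          intro h
          rw [h, hwc] at hcltA
          exact lt_irrefl _ hcltA
        have hwncrit : fderiv ℝ (orbVol u) w ≠ 0 := by
          intro hcw
          obtain ⟨ρ, hρpos, hρI, hρmax⟩ := hslm w hwI hcw
          refine singleton_clopen_contra hKpre hwK haK hane hρpos ?_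
          intro y hy hyne hyK
          have hyI := hKI hyK
          have h1 : Vbar y < Vbar w := by
            rw [hVagree y hyI, hVagree w hwI]
            exact hρmax y hy hyne
          have h2 : c ≤ Vbar y := ((hmemDiff c y).1 (hKD hyK)).2
          rw [hwc] at h1
          linarith
        obtain ⟨v₁, hv₁⟩ : ∃ v₁, fderiv ℝ (orbVol u) w v₁ ≠ 0 := by
          by_contra h
          push_neg at h
          exact hwncrit (ContinuousLinearMap.ext fun v => by rw [h v]; rfl)
        set v₂ := if 0 < fderiv ℝ (orbVol u) w v₁ then v₁ else -v₁ with hv₂def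
        have hv₂pos : 0 < fderiv ℝ (orbVol u) w v₂ := by
          rw [hv₂def]
          split_ifs with h
          · exact h
          · rw [map_neg]
            rcases hv₁.lt_or_gt with h' | h'
            · linarith
            · exact absurd h' h
        have hv₂ne : v₂ ≠ 0 := by
          intro h
          rw [h, map_zero] at hv₂pos
          exact lt_irrefl _ hv₂pos
        set v := ‖v₂‖⁻¹ • v₂ with hvdef
        have hvnorm : ‖v‖ = 1 := by
          rw [hvdef, norm_smul, norm_inv, norm_norm]
          exact inv_mul_cancel₀ (norm_ne_zero_iff.2 hv₂ne)
        set δ₂ := fderiv ℝ (orbVol u) w v with hδ₂def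
        have hδ₂pos : 0 < δ₂ := by
          rw [hδ₂def, hvdef, ContinuousLinearMap.map_smul, smul_eq_mul]
          exact mul_pos (inv_pos.2 (norm_pos_iff.2 hv₂ne)) hv₂pos
        set δ := δ₂ / 2 with hδdef
        have hδpos : 0 < δ := by rw [hδdef]; linarith
        clear_value v₂ v δ₂ δ
        have hdercont : ContinuousAt (fun x => fderiv ℝ (orbVol u) x v) w := by
          have h1 : ContinuousOn (fderiv ℝ (orbVol u)) (interior P) :=
            hVsm.continuousOn_fderiv_of_isOpen hIo (by simp)
          have h2 : ContinuousOn (fun x => fderiv ℝ (orbVol u) x v) (interior P) :=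
            (ContinuousLinearMap.apply ℝ ℝ v).continuous.comp_continuousOn h1
          exact h2.continuousAt (hIo.mem_nhds hwI)
        have hev : ∀ᶠ x in 𝓝 w, δ < fderiv ℝ (orbVol u) x v ∧ x ∈ interior P := by
          apply Filter.Eventually.and
          · have hgoal : (fun x => fderiv ℝ (orbVol u) x v) w ∈ Ioi δ := by
              show δ < fderiv ℝ (orbVol u) w v
              rw [← hδ₂def, hδdef]
              linarith
            have h3 : (fun x => fderiv ℝ (orbVol u) x v) ⁻¹' Ioi δ ∈ 𝓝 w :=
              hdercont (isOpen_Ioi.mem_nhds hgoal)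
            filter_upwards [h3] with x hx
            exact hx
          · exact hIo.mem_nhds hwI
        rw [Metric.eventually_nhds_iff_ball] at hev
        obtain ⟨r₀, hr₀pos, hr₀⟩ := hev
        set s₁ := r₀ / 4 with hs₁def
        have hs₁pos : 0 < s₁ := by rw [hs₁def]; linarith
        clear_value s₁
        have hball : ∀ p ∈ Metric.ball w s₁, ∀ t : ℝ, 0 ≤ t → t ≤ s₁ →
            p + t • v ∈ Metric.ball w r₀ := by
          intro p hp t ht0 hts
          rw [Metric.mem_ball, dist_eq_norm]
          have heq : p + t • v - w = (p - w) + t • v := add_sub_right_comm p (t • v) w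
          rw [heq]
          have h1 : ‖(p - w) + t • v‖ ≤ ‖p - w‖ + ‖t • v‖ := norm_add_le _ _
          have h2 : ‖t • v‖ = |t| * ‖v‖ := by rw [norm_smul, Real.norm_eq_abs]
          have h3 : ‖p - w‖ < s₁ := by
            rw [← dist_eq_norm]
            exact Metric.mem_ball.1 hp
          rw [h2, hvnorm, abs_of_nonneg ht0] at h1
          have hs₁r : s₁ = r₀ / 4 := hs₁def
          calc ‖p - w + t • v‖ ≤ ‖p - w‖ + t * 1 := h1
            _ < s₁ + s₁ := by linarith
            _ < r₀ := by rw [hs₁r]; linarith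
        have hMVT : ∀ p ∈ Metric.ball w s₁, ∀ s : ℝ, 0 < s → s ≤ s₁ →
            orbVol u p + s * δ < orbVol u (p + s • v) := by
          intro p hp s hs0 hss
          set g : ℝ → ℝ := fun t => orbVol u (p + t • v) with hgdef
          have hder : ∀ t ∈ Icc (0:ℝ) s, HasDerivAt g
              (fderiv ℝ (orbVol u) (p + t • v) v) t := by
            intro t ht
            have hmem : p + t • v ∈ Metric.ball w r₀ :=
              hball p hp t ht.1 (le_trans ht.2 hss)
            have hmemI : p + t • v ∈ interior P := (hr₀ _ hmem).2
            have hdiff : DifferentiableAt ℝ (orbVol u) (p + t • v) :=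
              ((hVsm _ hmemI).contDiffAt (hIo.mem_nhds hmemI)).differentiableAt (by simp)
            exact hasDerivAt_line hdiff
          obtain ⟨τ, hτ, hτslope⟩ := exists_hasDerivAt_eq_slope g
            (fun t => fderiv ℝ (orbVol u) (p + t • v) v) hs0
            (fun t ht => (hder t ht).continuousAt.continuousWithinAt)
            (fun t ht => hder t ⟨le_of_lt ht.1, le_of_lt ht.2⟩)
          have hτball : p + τ • v ∈ Metric.ball w r₀ :=
            hball p hp τ (le_of_lt hτ.1) (le_of_lt (lt_of_lt_of_le hτ.2 hss))
          have hgt : δ < fderiv ℝ (orbVol u) (p + τ • v) v := (hr₀ _ hτball).1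
          rw [hτslope] at hgt
          rw [sub_zero] at hgt
          have h4 : δ * s < g s - g 0 := by
            rw [lt_div_iff₀ hs0] at hgt
            linarith
          have h5 : g 0 = orbVol u p := by
            rw [hgdef]
            norm_num
          rw [h5] at h4
          have : orbVol u p + s * δ < g s := by linarith [h4]
          exact this
        have hVcw : ContinuousAt (orbVol u) w :=
          (hVsm.continuousOn).continuousAt (hIo.mem_nhds hwI)
        have hVw : orbVol u w = c := by rw [← hVagree w hwI, hwc]
        have hev2 : ∀ᶠ x in 𝓝 w, c - δ * s₁ < orbVol u x := by
          have hgoal2 : c - δ * s₁ < orbVol u w := by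
            have hprod := mul_pos hδpos hs₁pos
            rw [hVw]
            linarith
          have h3 : (orbVol u) ⁻¹' Ioi (c - δ * s₁) ∈ 𝓝 w :=
            hVcw (isOpen_Ioi.mem_nhds hgoal2)
          filter_upwards [h3] with x hx
          exact hx
        rw [Metric.eventually_nhds_iff_ball] at hev2
        obtain ⟨r₁', hr₁'pos, hr₁'⟩ := hev2
        set r₁ := min r₁' s₁ with hr₁def
        have hr₁pos : 0 < r₁ := lt_min hr₁'pos hs₁pos
        have hr₁le : r₁ ≤ s₁ := min_le_right _ _
        have hr₁bound : ∀ x ∈ Metric.ball w r₁, c - δ * s₁ < orbVol u x :=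
          fun x hx => hr₁' x (Metric.ball_subset_ball (min_le_left _ _) hx)
        have hballsub : Metric.ball w r₁ ⊆ Metric.ball w s₁ :=
          Metric.ball_subset_ball hr₁le
        clear_value r₁
        have hupU : ∀ p ∈ Metric.ball w r₁, c ≤ orbVol u p →
            ∀ s : ℝ, 0 < s → s ≤ s₁ → p + s • v ∈ U := by
          intro p hp hpc s hs0 hss
          have h1 := hMVT p (hballsub hp) s hs0 hss
          have hmemI : p + s • v ∈ interior P :=
            (hr₀ _ (hball p (hballsub hp) s (le_of_lt hs0) hss)).2
          refine ⟨hmemI, ?_⟩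
          have hprod := mul_pos hδpos hs0
          rw [hVagree _ hmemI]
          nlinarith
        have hshiftU : ∀ x ∈ Metric.ball w r₁, x + s₁ • v ∈ U := by
          intro x hx
          have h1 := hMVT x (hballsub hx) s₁ hs₁pos (le_refl s₁)
          have h2 := hr₁bound x hx
          have hmemI : x + s₁ • v ∈ interior P :=
            (hr₀ _ (hball x (hballsub hx) s₁ (le_of_lt hs₁pos) (le_refl s₁))).2
          refine ⟨hmemI, ?_⟩
          rw [hVagree _ hmemI]
          nlinarith
        set Dplus := (fun x => x + s₁ • v) '' (Metric.ball w r₁) with hDplusdef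
        have hDpluspre : IsPreconnected Dplus :=
          ((convex_ball w r₁).isPreconnected).image _
            (continuous_id.add continuous_const).continuousOn
        have hDplusU : Dplus ⊆ U := by
          rintro _ ⟨x, hx, rfl⟩
          exact hshiftU x hx
        obtain ⟨q, hqA, hqdist⟩ := Metric.mem_closure_iff.1 hwcl r₁ hr₁pos
        have hqball : q ∈ Metric.ball w r₁ := by
          rw [Metric.mem_ball, dist_comm]
          exact hqdist
        have hqU : q ∈ U := hAU hqA
        have hqc : c ≤ orbVol u q := by
          rw [← hVagree q (hUI hqU)]
          exact le_of_lt hqU.2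
        set Lq := (fun s : ℝ => q + s • v) '' (Icc 0 s₁) with hLqdef
        have hLqpre : IsPreconnected Lq :=
          isPreconnected_Icc.image _
            ((continuous_const.add (continuous_id.smul continuous_const)).continuousOn)
        have hLqU : Lq ⊆ U := by
          rintro _ ⟨s, hs, rfl⟩
          show q + s • v ∈ U
          rcases eq_or_lt_of_le hs.1 with h | h
          · have : q + s • v = q := by rw [← h]; simp
            rw [this]
            exact hqU
          · exact hupU q hqball hqc s h hs.2
        have hqLq : q ∈ Lq := ⟨0, ⟨le_refl 0, le_of_lt hs₁pos⟩, by simp⟩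
        have hLqA : Lq ⊆ A := habsorb Lq hLqpre hLqU ⟨q, hqLq, hqA⟩
        have hqtopA : q + s₁ • v ∈ A :=
          hLqA ⟨s₁, ⟨le_of_lt hs₁pos, le_refl s₁⟩, rfl⟩
        have hDplusA : Dplus ⊆ A :=
          habsorb Dplus hDpluspre hDplusU ⟨q + s₁ • v, ⟨q, hqball, rfl⟩, hqtopA⟩
        refine ⟨r₁, hr₁pos, ?_⟩
        intro p hp hpK
        have hpI : p ∈ interior P := hKI hpK
        have hpc : c ≤ orbVol u p := by
          rw [← hVagree p hpI]
          exact ((hmemDiff c p).1 (hKD hpK)).2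
        set Lp := (fun s : ℝ => p + s • v) '' (Ioc 0 s₁) with hLpdef
        have hLppre : IsPreconnected Lp :=
          isPreconnected_Ioc.image _
            ((continuous_const.add (continuous_id.smul continuous_const)).continuousOn)
        have hLpU : Lp ⊆ U := by
          rintro _ ⟨s, hs, rfl⟩
          show p + s • v ∈ U
          exact hupU p hp hpc s hs.1 hs.2
        have hLpA : Lp ⊆ A := by
          apply habsorb Lp hLppre hLpU
          refine ⟨p + s₁ • v, ⟨s₁, ⟨hs₁pos, le_refl s₁⟩, rfl⟩, hDplusA ⟨p, hp, rfl⟩⟩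
        have hpclos : p ∈ closure Lp := by
          have htend : Filter.Tendsto (fun s : ℝ => p + s • v) (𝓝[>] (0:ℝ)) (𝓝 p) := by
            have hcont : Continuous (fun s : ℝ => p + s • v) :=
              continuous_const.add (continuous_id.smul continuous_const)
            have := (hcont.tendsto 0).mono_left (nhdsWithin_le_nhds (s := Ioi (0:ℝ)))
            simpa using this
          apply mem_closure_of_tendsto htend
          have hIoc : Ioc (0:ℝ) s₁ ∈ 𝓝[>] (0:ℝ) := Ioc_mem_nhdsGT hs₁pos
          filter_upwards [hIoc] with s hs
          exact ⟨s, hs, rfl⟩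
        exact closure_mono hLpA hpclos
    have hKclA : K ⊆ closure A := by
      choose! rr hrrpos hrr using hloc
      by_contra hKnot
      obtain ⟨z, hzK, hzncl⟩ := Set.not_subset.1 hKnot
      set O1 := ⋃ (w) (_ : w ∈ K ∧ w ∈ closure A), Metric.ball w (rr w) with hO1def
      have hO1open : IsOpen O1 :=
        isOpen_iUnion fun w => isOpen_iUnion fun _ => Metric.isOpen_ball
      have hcover : K ⊆ O1 ∪ (closure A)ᶜ := by
        intro x hx
        by_cases h : x ∈ closure A
        · left
          exact Set.mem_iUnion₂.2 ⟨x, ⟨hx, h⟩, Metric.mem_ball_self (hrrpos x ⟨hx, h⟩)⟩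
        · right
          exact h
      obtain ⟨y, hyK, hyO, hync⟩ := hKpre O1 ((closure A)ᶜ) hO1open
        isClosed_closure.isOpen_compl hcover
        ⟨a, haK, Set.mem_iUnion₂.2 ⟨a, ⟨haK, subset_closure haA⟩,
          Metric.mem_ball_self (hrrpos a ⟨haK, subset_closure haA⟩)⟩⟩
        ⟨z, hzK, hzncl⟩
      obtain ⟨w, hw, hyball⟩ := Set.mem_iUnion₂.1 hyO
      exact hync (hrr w hw y hyball hyK)
    have hbA : b ∈ A := hclosA b (hKclA hbKc) hbU
    have hAconn : IsConnected A := ⟨⟨a, haA⟩, hApre⟩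
    have hApath : IsPathConnected A := (hAopen.isConnected_iff_isPathConnected).1 hAconn
    obtain ⟨γ, hγ⟩ := hApath.joinedIn a haA b hbA
    set S := Set.range γ with hSdef
    have hScomp : IsCompact S := isCompact_range γ.continuous
    have hSpre : IsPreconnected S := (isConnected_range γ.continuous).isPreconnected
    have hSA : S ⊆ A := by
      rintro x ⟨t, rfl⟩
      exact hγ t
    have haS : a ∈ S := ⟨0, γ.source⟩
    have hbS : b ∈ S := ⟨1, γ.target⟩
    have hSP : S ⊆ P := fun x hx => interior_subset (hUI (hAU (hSA hx)))
    obtain ⟨y₀, hy₀S, hy₀min⟩ := hScomp.exists_isMinOn ⟨a, haS⟩ (hVc.mono hSP)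
    have hy₀U : y₀ ∈ U := hAU (hSA hy₀S)
    have ht'c : c < Vbar y₀ := hy₀U.2
    have hSD : S ⊆ D (Vbar y₀) := by
      intro x hx
      rw [hmemDiff]
      exact ⟨hSP hx, hy₀min hx⟩
    have hTmem : Vbar y₀ ∈ T :=
      ⟨lt_trans hcpos ht'c, hSpre.subset_connectedComponentIn haS hSD hbS⟩
    have : Vbar y₀ ≤ c := by
      rw [hcdef]
      exact le_csSup hTbdd hTmem
    linarith
  -- existence
  obtain ⟨xi, hxi⟩ := hPint
  have hPne : P.Nonempty := ⟨xi, interior_subset hxi⟩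
  obtain ⟨x₀, hx₀P, hx₀max⟩ := hP.exists_isMaxOn hPne hVc
  have hx₀pos : 0 < Vbar x₀ := lt_of_lt_of_le (hVposP xi hxi) (hx₀max (interior_subset hxi))
  have hx₀I : x₀ ∈ interior P := by
    by_contra h
    rw [hVzero_out x₀ hx₀P h] at hx₀pos
    exact lt_irrefl _ hx₀pos
  have hlocmax : IsLocalMax (orbVol u) x₀ := by
    filter_upwards [hIo.mem_nhds hx₀I] with y hy
    rw [← hVagree y hy, ← hVagree x₀ hx₀I]
    exact hx₀max (interior_subset hy)
  have hcrit₀ : fderiv ℝ (orbVol u) x₀ = 0 := hlocmax.fderiv_eq_zero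
  exact ⟨x₀, ⟨hx₀I, hcrit₀⟩, fun y hy => key x₀ hx₀I hcrit₀ y hy.1 hy.2⟩
end

section
/- Let Ω ⊆ ℝ^n be open and u : Ω → ℝ a smooth function whose Hessian matrix H(x) = (∂²u/∂x^i∂x^j(x)) is positive definite at every point of Ω; write (u^{ij}) for the entries of H^{-1} and V = (det H)^{-1/2}. Then for every j, k ∈ {1,…,n} and every x ∈ Ω one has −(1/2) ∑_{l=1}^n ∂²u^{jl}/∂x^l∂x^k (x) = −∂/∂x^k ( ∑_{l=1}^n u^{jl} ∂(log V)/∂x^l )(x). -/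
open Real Set Topology Filter Matrix

section Aux

variable {n : ℕ} {Ω : Set (Fin n → ℝ)}

/-- pd of a smooth function is smooth on an open set. -/
lemma contDiffOn_pd (hΩ : IsOpen Ω) {f : (Fin n → ℝ) → ℝ}
    (hf : ContDiffOn ℝ (⊤ : ℕ∞) f Ω) (i : Fin n) :
    ContDiffOn ℝ (⊤ : ℕ∞) (pd i f) Ω := by
  have h1 : ContDiffOn ℝ (⊤ : ℕ∞) (fun x => fderiv ℝ f x) Ω :=
    hf.fderiv_of_isOpen hΩ (le_of_eq (by norm_cast))
  exact (ContinuousLinearMap.apply ℝ ℝ (Pi.single i 1)).contDiff.comp_contDiffOn h1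

lemma diffAt_of_contDiffOn (hΩ : IsOpen Ω) {f : (Fin n → ℝ) → ℝ}
    (hf : ContDiffOn ℝ (⊤ : ℕ∞) f Ω) {x : Fin n → ℝ} (hx : x ∈ Ω) :
    DifferentiableAt ℝ f x :=
  (hf.differentiableOn (by simp)).differentiableAt (hΩ.mem_nhds hx)

lemma pd_congr_of_eqOn (hΩ : IsOpen Ω) {f g : (Fin n → ℝ) → ℝ}
    (h : ∀ y ∈ Ω, f y = g y) {x : Fin n → ℝ} (hx : x ∈ Ω) (i : Fin n) :
    pd i f x = pd i g x := by
  have : f =ᶠ[𝓝 x] g := eventually_of_mem (hΩ.mem_nhds hx) h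
  simp only [pd, this.fderiv_eq]

lemma pd_const {x : Fin n → ℝ} (i : Fin n) (c : ℝ) : pd i (fun _ => c) x = 0 := by
  simp [pd]

lemma pd_const_mul {f : (Fin n → ℝ) → ℝ} {x : Fin n → ℝ}
    (hf : DifferentiableAt ℝ f x) (i : Fin n) (c : ℝ) :
    pd i (fun y => c * f y) x = c * pd i f x := by
  simp [pd, fderiv_const_mul hf c]

lemma pd_mul {f g : (Fin n → ℝ) → ℝ} {x : Fin n → ℝ}
    (hf : DifferentiableAt ℝ f x) (hg : DifferentiableAt ℝ g x) (i : Fin n) :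
    pd i (fun y => f y * g y) x = pd i f x * g x + f x * pd i g x := by
  simp only [pd, fderiv_fun_mul hf hg, ContinuousLinearMap.add_apply,
    ContinuousLinearMap.smul_apply, smul_eq_mul]
  ring

lemma pd_sum {ι : Type*} {s : Finset ι} {f : ι → (Fin n → ℝ) → ℝ} {x : Fin n → ℝ}
    (h : ∀ a ∈ s, DifferentiableAt ℝ (f a) x) (i : Fin n) :
    pd i (fun y => ∑ a ∈ s, f a y) x = ∑ a ∈ s, pd i (f a) x := by
  simp only [pd, fderiv_fun_sum h, ContinuousLinearMap.sum_apply]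

/-- symmetry of second partial derivatives -/
lemma pd_comm (hΩ : IsOpen Ω) {f : (Fin n → ℝ) → ℝ}
    (hf : ContDiffOn ℝ (⊤ : ℕ∞) f Ω) {x : Fin n → ℝ} (hx : x ∈ Ω) (a b : Fin n) :
    pd a (pd b f) x = pd b (pd a f) x := by
  have hsym : IsSymmSndFDerivAt ℝ f x :=
    (hf.contDiffAt (hΩ.mem_nhds hx)).isSymmSndFDerivAt
      (by rw [minSmoothness_of_isRCLikeNormedField]; exact WithTop.coe_le_coe.2 le_top)
  have hdf : DifferentiableAt ℝ (fun y => fderiv ℝ f y) x :=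
    ((hf.fderiv_of_isOpen (m := ((⊤ : ℕ∞) : WithTop ℕ∞)) hΩ (le_of_eq (by norm_cast))).differentiableOn
      (by simp)).differentiableAt (hΩ.mem_nhds hx)
  have key : ∀ (c : Fin n) (v : Fin n → ℝ), pd c (fun y => fderiv ℝ f y v) x
      = fderiv ℝ (fderiv ℝ f) x (Pi.single c 1) v := by
    intro c v
    have h2 : HasFDerivAt (fun y => fderiv ℝ f y v)
        ((ContinuousLinearMap.apply ℝ ℝ v).comp (fderiv ℝ (fderiv ℝ f) x)) x :=
      (ContinuousLinearMap.apply ℝ ℝ v).hasFDerivAt.comp x hdf.hasFDerivAt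
    simp [pd, h2.fderiv]
  show pd a (fun y => fderiv ℝ f y (Pi.single b 1)) x
    = pd b (fun y => fderiv ℝ f y (Pi.single a 1)) x
  rw [key a, key b]
  exact hsym.eq _ _

lemma contDiffOn_mdet {M : (Fin n → ℝ) → Matrix (Fin n) (Fin n) ℝ}
    (h : ∀ a b, ContDiffOn ℝ (⊤ : ℕ∞) (fun y => M y a b) Ω) :
    ContDiffOn ℝ (⊤ : ℕ∞) (fun y => (M y).det) Ω := by
  have hd : ∀ y, (M y).det = ∑ σ : Equiv.Perm (Fin n),
      (Equiv.Perm.sign σ : ℤ) * ∏ i, M y (σ i) i := by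
    intro y; rw [Matrix.det_apply]; simp [Units.smul_def, zsmul_eq_mul]
  simp only [hd]
  apply ContDiffOn.sum
  intro σ _
  apply ContDiffOn.mul contDiffOn_const
  intro y hy
  exact contDiffWithinAt_prod (fun i _ => h (σ i) i y hy)

lemma contDiffOn_madj {M : (Fin n → ℝ) → Matrix (Fin n) (Fin n) ℝ}
    (h : ∀ a b, ContDiffOn ℝ (⊤ : ℕ∞) (fun y => M y a b) Ω) (a b : Fin n) :
    ContDiffOn ℝ (⊤ : ℕ∞) (fun y => (M y).adjugate a b) Ω := by
  simp only [Matrix.adjugate_apply]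
  apply contDiffOn_mdet
  intro c d
  by_cases hc : c = b
  · subst hc; simp only [Matrix.updateRow_self]; exact contDiffOn_const
  · simpa [Matrix.updateRow_ne hc] using h c d

/-- The determinant as a continuous multilinear map in the rows. -/
noncomputable def detCM (n : ℕ) :
    ContinuousMultilinearMap ℝ (fun _ : Fin n => (Fin n → ℝ)) ℝ :=
  MultilinearMap.mkContinuous
    (Matrix.detRowAlternating : (Fin n → ℝ) [⋀^Fin n]→ₗ[ℝ] ℝ).toMultilinearMap
    (Nat.factorial n) (by
      intro m
      have hdet : (Matrix.detRowAlternating (R := ℝ) (n := Fin n)).toMultilinearMap m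
          = Matrix.det (Matrix.of m) := rfl
      rw [hdet, Matrix.det_apply]
      calc ‖∑ σ : Equiv.Perm (Fin n), Equiv.Perm.sign σ • ∏ i, Matrix.of m (σ i) i‖
          ≤ ∑ σ : Equiv.Perm (Fin n), ‖Equiv.Perm.sign σ • ∏ i, Matrix.of m (σ i) i‖ :=
            norm_sum_le _ _
        _ ≤ ∑ _σ : Equiv.Perm (Fin n), ∏ i, ‖m i‖ := by
            apply Finset.sum_le_sum
            intro σ _
            have h1 : ‖Equiv.Perm.sign σ • ∏ i, Matrix.of m (σ i) i‖
                = ‖∏ i, m (σ i) i‖ := by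
              rcases Int.units_eq_one_or (Equiv.Perm.sign σ) with h | h <;>
                simp [h, Units.smul_def, Matrix.of_apply]
            rw [h1]
            calc ‖∏ i, m (σ i) i‖ = ∏ i, ‖m (σ i) i‖ := by
                  rw [Real.norm_eq_abs, Finset.abs_prod]; simp [Real.norm_eq_abs]
              _ ≤ ∏ i, ‖m (σ i)‖ := by
                  apply Finset.prod_le_prod (fun i _ => norm_nonneg _)
                  intro i _; exact norm_le_pi_norm (m (σ i)) i
              _ = ∏ i, ‖m i‖ := Equiv.prod_comp σ (fun i => ‖m i‖)
        _ = (Nat.factorial n : ℝ) * ∏ i, ‖m i‖ := by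
            rw [Finset.sum_const, Finset.card_univ]
            simp [Fintype.card_perm, nsmul_eq_mul])

lemma pd_det {M : (Fin n → ℝ) → Matrix (Fin n) (Fin n) ℝ} {x : Fin n → ℝ}
    (hdiff : ∀ a b, DifferentiableAt ℝ (fun y => M y a b) x) (l : Fin n) :
    pd l (fun y => (M y).det) x
      = ∑ i, ((M x).updateRow i (fun c => pd l (fun y => M y i c) x)).det := by
  classical
  set g' : Fin n → ((Fin n → ℝ) →L[ℝ] (Fin n → ℝ)) :=
    fun i => ContinuousLinearMap.pi (fun c => fderiv ℝ (fun y => M y i c) x) with hg'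
  have hg : ∀ i, HasFDerivAt (fun y => (fun c => M y i c)) (g' i) x :=
    fun i => hasFDerivAt_pi.2 (fun c => (hdiff i c).hasFDerivAt)
  have hF := HasFDerivAt.multilinear_comp (detCM n) hg
  have heq : (fun y => detCM n (fun i c => M y i c)) = fun y => (M y).det := rfl
  rw [heq] at hF
  have h0 : pd l (fun y => (M y).det) x
      = (∑ i, ((detCM n).toContinuousLinearMap (fun j c => M x j c) i).comp (g' i))
          (Pi.single l 1) := by
    rw [pd, hF.fderiv]
  rw [h0, ContinuousLinearMap.sum_apply]
  refine Finset.sum_congr rfl fun i _ => ?_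
  rw [ContinuousLinearMap.comp_apply]
  have h1 : g' i (Pi.single l 1) = fun c => pd l (fun y => M y i c) x := rfl
  rw [h1]
  rfl

lemma det_updateRow_adj (A : Matrix (Fin n) (Fin n) ℝ) (i : Fin n) (b : Fin n → ℝ) :
    (A.updateRow i b).det = ∑ c, A.adjugate c i * b c := by
  rw [← Matrix.cramer_transpose_apply, Matrix.cramer_eq_adjugate_mulVec,
    ← Matrix.adjugate_transpose]
  simp [Matrix.mulVec, dotProduct]

lemma sum_juggle {m : ℕ} (g : Fin m → ℝ) (M : Matrix (Fin m) (Fin m) ℝ)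
    (T : Fin m → Fin m → Fin m → ℝ) (hT : ∀ a b c, T a b c = T b a c) :
    ∑ l, g l * (-(1/2 : ℝ) * ∑ i, ∑ c, M c i * T l i c)
      = (1/2 : ℝ) * ∑ l, -∑ c, ∑ d, g c * T l c d * M d l := by
  have main : ∑ l, ∑ i, ∑ c, g l * (M c i * T l i c)
      = ∑ l, ∑ c, ∑ d, g c * T l c d * M d l := by
    conv_rhs => rw [Finset.sum_comm]
    refine Finset.sum_congr rfl fun l _ => Finset.sum_congr rfl fun i _ =>
      Finset.sum_congr rfl fun c _ => ?_
    rw [hT i l]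
    ring
  calc ∑ l, g l * (-(1/2 : ℝ) * ∑ i, ∑ c, M c i * T l i c)
      = -(1/2 : ℝ) * ∑ l, ∑ i, ∑ c, g l * (M c i * T l i c) := by
        rw [Finset.mul_sum]
        refine Finset.sum_congr rfl fun l _ => ?_
        rw [mul_left_comm, Finset.mul_sum]
        refine congrArg _ (Finset.sum_congr rfl fun i _ => ?_)
        rw [Finset.mul_sum]
    _ = -(1/2 : ℝ) * ∑ l, ∑ c, ∑ d, g c * T l c d * M d l := by rw [main]
    _ = (1/2 : ℝ) * ∑ l, -∑ c, ∑ d, g c * T l c d * M d l := by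
        rw [Finset.sum_neg_distrib]; ring

end Aux

theorem stmt2 (n : ℕ) (Ω : Set (Fin n → ℝ)) (hΩ : IsOpen Ω)
    (u : (Fin n → ℝ) → ℝ) (hu : ContDiffOn ℝ (⊤ : ℕ∞) u Ω)
    (hpos : ∀ x ∈ Ω, (Hess u x).PosDef)
    (j k : Fin n) (x : Fin n → ℝ) (hx : x ∈ Ω) :
    -(1/2 : ℝ) * ∑ l, pd k (pd l (fun y => ((Hess u y)⁻¹) j l)) x
      = -(pd k (fun y => ∑ l, ((Hess u y)⁻¹) j l
          * pd l (fun z => Real.log (orbVol u z)) y) x) := by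
  classical
  -- Basic smoothness facts
  have hHentry : ∀ a b : Fin n, ContDiffOn ℝ (⊤ : ℕ∞) (fun y => Hess u y a b) Ω :=
    fun a b => contDiffOn_pd hΩ (contDiffOn_pd hΩ hu b) a
  have hdetC : ContDiffOn ℝ (⊤ : ℕ∞) (fun y => (Hess u y).det) Ω := contDiffOn_mdet hHentry
  have hdetpos : ∀ y ∈ Ω, 0 < (Hess u y).det := fun y hy => (hpos y hy).det_pos
  have hdetne : ∀ y ∈ Ω, (Hess u y).det ≠ 0 := fun y hy => ne_of_gt (hdetpos y hy)
  have hGdef : ∀ (y : Fin n → ℝ) (a b : Fin n),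
      (Hess u y)⁻¹ a b = ((Hess u y).det)⁻¹ * (Hess u y).adjugate a b := by
    intro y a b
    rw [Matrix.inv_def, Matrix.smul_apply, Ring.inverse_eq_inv', smul_eq_mul]
  have hGC : ∀ a b : Fin n, ContDiffOn ℝ (⊤ : ℕ∞) (fun y => (Hess u y)⁻¹ a b) Ω := by
    intro a b
    refine ContDiffOn.congr (ContDiffOn.mul (hdetC.inv hdetne) (contDiffOn_madj hHentry a b)) ?_
    intro y _; exact hGdef y a b
  have hHd : ∀ (a b : Fin n) (y : Fin n → ℝ), y ∈ Ω →
      DifferentiableAt ℝ (fun z => Hess u z a b) y :=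
    fun a b y hy => diffAt_of_contDiffOn hΩ (hHentry a b) hy
  have hGd : ∀ (a b : Fin n) (y : Fin n → ℝ), y ∈ Ω →
      DifferentiableAt ℝ (fun z => (Hess u z)⁻¹ a b) y :=
    fun a b y hy => diffAt_of_contDiffOn hΩ (hGC a b) hy
  -- adjugate = det • inverse
  have hadj : ∀ y ∈ Ω, ∀ a b : Fin n,
      (Hess u y).adjugate a b = (Hess u y).det * (Hess u y)⁻¹ a b := by
    intro y hy a b
    rw [hGdef y a b, ← mul_assoc, mul_inv_cancel₀ (hdetne y hy), one_mul]
  -- C1 : derivative of the determinant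
  have hpdet : ∀ y ∈ Ω, ∀ l : Fin n, pd l (fun z => (Hess u z).det) y
      = (Hess u y).det * ∑ i, ∑ c, (Hess u y)⁻¹ c i * pd l (fun z => Hess u z i c) y := by
    intro y hy l
    rw [pd_det (fun a b => hHd a b y hy) l]
    rw [Finset.mul_sum]
    refine Finset.sum_congr rfl fun i _ => ?_
    rw [det_updateRow_adj, Finset.mul_sum]
    refine Finset.sum_congr rfl fun c _ => ?_
    rw [hadj y hy c i]; ring
  -- C2 : derivative of log det
  have hlogdet : ∀ y ∈ Ω, ∀ l : Fin n, pd l (fun z => Real.log ((Hess u z).det)) y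
      = ∑ i, ∑ c, (Hess u y)⁻¹ c i * pd l (fun z => Hess u z i c) y := by
    intro y hy l
    have hdd : DifferentiableAt ℝ (fun z => (Hess u z).det) y :=
      diffAt_of_contDiffOn hΩ hdetC hy
    have hlog := hdd.hasFDerivAt.log (hdetne y hy)
    have : pd l (fun z => Real.log ((Hess u z).det)) y
        = ((Hess u y).det)⁻¹ * pd l (fun z => (Hess u z).det) y := by
      rw [pd, hlog.fderiv]; simp [pd]
    rw [this, hpdet y hy l, ← mul_assoc, inv_mul_cancel₀ (hdetne y hy), one_mul]
  -- C3 : derivative of log orbVol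
  have hlogV : ∀ y ∈ Ω, ∀ l : Fin n, pd l (fun z => Real.log (orbVol u z)) y
      = -(1/2 : ℝ) * ∑ i, ∑ c, (Hess u y)⁻¹ c i * pd l (fun z => Hess u z i c) y := by
    intro y hy l
    have heq : ∀ z ∈ Ω, Real.log (orbVol u z)
        = -(1/2 : ℝ) * Real.log ((Hess u z).det) := by
      intro z hz
      rw [orbVol, Real.log_rpow (hdetpos z hz)]
    have hdiff : DifferentiableAt ℝ (fun z => Real.log ((Hess u z).det)) y :=
      ((diffAt_of_contDiffOn hΩ hdetC hy).hasFDerivAt.log (hdetne y hy)).differentiableAt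
    rw [pd_congr_of_eqOn hΩ heq hy l, pd_const_mul hdiff, hlogdet y hy l]
  -- invertibility facts
  have hGH : ∀ y ∈ Ω, (Hess u y)⁻¹ * Hess u y = 1 :=
    fun y hy => Matrix.nonsing_inv_mul _ (isUnit_iff_ne_zero.2 (hdetne y hy))
  have hHG : ∀ y ∈ Ω, Hess u y * (Hess u y)⁻¹ = 1 :=
    fun y hy => Matrix.mul_nonsing_inv _ (isUnit_iff_ne_zero.2 (hdetne y hy))
  -- C4 : derivative of the inverse matrix entries
  have hpdG : ∀ y ∈ Ω, ∀ l a b : Fin n, pd l (fun z => (Hess u z)⁻¹ a b) y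
      = -∑ c, ∑ d, (Hess u y)⁻¹ a c * pd l (fun z => Hess u z c d) y * (Hess u y)⁻¹ d b := by
    intro y hy l a b
    set G : (Fin n → ℝ) → Matrix (Fin n) (Fin n) ℝ := fun z => (Hess u z)⁻¹ with hG
    set P : Matrix (Fin n) (Fin n) ℝ :=
      Matrix.of (fun a b => pd l (fun z => G z a b) y) with hP
    set Q : Matrix (Fin n) (Fin n) ℝ :=
      Matrix.of (fun a b => pd l (fun z => Hess u z a b) y) with hQ
    have step1 : P * Hess u y + G y * Q = 0 := by
      ext a' b'
      have hprod : pd l (fun z => ∑ c, G z a' c * Hess u z c b') y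
          = ∑ c, (pd l (fun z => G z a' c) y * Hess u y c b'
              + G y a' c * pd l (fun z => Hess u z c b') y) := by
        rw [pd_sum (fun c _ => ((hGd a' c y hy).fun_mul (hHd c b' y hy))) l]
        exact Finset.sum_congr rfl fun c _ => pd_mul (hGd a' c y hy) (hHd c b' y hy) l
      have hconst : pd l (fun z => ∑ c, G z a' c * Hess u z c b') y = 0 := by
        have heq1 : ∀ z ∈ Ω, ∑ c, G z a' c * Hess u z c b'
            = (1 : Matrix (Fin n) (Fin n) ℝ) a' b' := by
          intro z hz
          rw [← Matrix.mul_apply, hGH z hz]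
        rw [pd_congr_of_eqOn hΩ heq1 hy l, pd_const]
      rw [hprod] at hconst
      have : ∑ c, pd l (fun z => G z a' c) y * Hess u y c b'
          + ∑ c, G y a' c * pd l (fun z => Hess u z c b') y = 0 := by
        rw [← Finset.sum_add_distrib]; exact hconst
      simpa [Matrix.add_apply, Matrix.mul_apply, Matrix.zero_apply, hP, hQ] using this
    have step2 : P = -(G y * Q * G y) := by
      have h1 : P * Hess u y = -(G y * Q) := by
        have := step1
        rw [add_eq_zero_iff_eq_neg] at this
        exact this
      calc P = P * (Hess u y * G y) := by rw [hHG y hy, mul_one]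
        _ = (P * Hess u y) * G y := by rw [mul_assoc]
        _ = -(G y * Q) * G y := by rw [h1]
        _ = -(G y * Q * G y) := by rw [neg_mul]
    have : P a b = -((G y * Q * G y) a b) := by rw [step2]; simp
    rw [show pd l (fun z => (Hess u z)⁻¹ a b) y = P a b from rfl, this]
    congr 1
    rw [Matrix.mul_apply]
    simp_rw [Matrix.mul_apply, Finset.sum_mul]
    rw [Finset.sum_comm]
    rfl
  -- the key identity on Ω
  have hkey : ∀ y ∈ Ω,
      ∑ l, (Hess u y)⁻¹ j l * pd l (fun z => Real.log (orbVol u z)) y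
        = (1/2 : ℝ) * ∑ l, pd l (fun z => (Hess u z)⁻¹ j l) y := by
    intro y hy
    have hR : ∀ l : Fin n, pd l (fun z => (Hess u z)⁻¹ j l) y
        = -∑ c, ∑ d, (Hess u y)⁻¹ j c * pd l (fun z => Hess u z c d) y
            * (Hess u y)⁻¹ d l := fun l => hpdG y hy l j l
    simp_rw [hlogV y hy, hR]
    exact sum_juggle (fun a => (Hess u y)⁻¹ j a) ((Hess u y)⁻¹)
      (fun a b c => pd a (fun z => Hess u z b c) y)
      (fun a b c => pd_comm hΩ (contDiffOn_pd hΩ hu c) hy a b)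
  -- final assembly
  have hdG : ∀ l : Fin n, DifferentiableAt ℝ (pd l (fun z => (Hess u z)⁻¹ j l)) x :=
    fun l => diffAt_of_contDiffOn hΩ (contDiffOn_pd hΩ (hGC j l) l) hx
  have hsum : DifferentiableAt ℝ (fun y => ∑ l, pd l (fun z => (Hess u z)⁻¹ j l) y) x := by
    apply DifferentiableAt.fun_sum
    intro l _
    exact hdG l
  have e1 : pd k (fun y => ∑ l, (Hess u y)⁻¹ j l
        * pd l (fun z => Real.log (orbVol u z)) y) x
      = pd k (fun y => (1/2 : ℝ) * ∑ l, pd l (fun z => (Hess u z)⁻¹ j l) y) x :=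
    pd_congr_of_eqOn hΩ (fun y hy => hkey y hy) hx k
  rw [e1, pd_const_mul hsum, pd_sum (fun l _ => hdG l) k]
  ring
end

section
/- Let Δ° = {(x₁,x₂) ∈ ℝ² : x₁ > 0, x₂ > 0, x₁ + x₂ < 1}, let u_G(x₁,x₂) = (1/2)(x₁ log x₁ − x₁ + x₂ log x₂ − x₂ + (1−x₁−x₂) log(1−x₁−x₂) − (1−x₁−x₂)), let f be a smooth real-valued function on an open interval containing (0,1), and set u = u_G + (1/2) f(x₁+x₂) on Δ°. Then: (i) for every (x₁,x₂) ∈ Δ°, det Hess u (x₁,x₂) = (1 + (x₁+x₂)(1−x₁−x₂) f''(x₁+x₂)) / (4 x₁ x₂ (1−x₁−x₂)); and (ii) Hess u is positive definite at every point of Δ° if and only if 1 + t(1−t) f''(t) > 0 for every t ∈ (0,1). -/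
open Real Set Topology Filter Matrix

/-- Guillemin symplectic potential of `ℂP²` on the standard simplex. -/
noncomputable def uGCP2 : (Fin 2 → ℝ) → ℝ := fun x =>
  (1/2) * (x 0 * Real.log (x 0) - x 0 + x 1 * Real.log (x 1) - x 1
    + (1 - x 0 - x 1) * Real.log (1 - x 0 - x 1) - (1 - x 0 - x 1))

/-- The open standard simplex in `ℝ²`. -/
def simplex2 : Set (Fin 2 → ℝ) := {x | 0 < x 0 ∧ 0 < x 1 ∧ x 0 + x 1 < 1}

lemma isOpen_simplex2 : IsOpen simplex2 := by
  have h0 : Continuous (fun x : Fin 2 → ℝ => x 0) := continuous_apply 0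
  have h1 : Continuous (fun x : Fin 2 → ℝ => x 1) := continuous_apply 1
  have : simplex2 = (fun x : Fin 2 → ℝ => x 0) ⁻¹' (Ioi 0) ∩
      ((fun x : Fin 2 → ℝ => x 1) ⁻¹' (Ioi 0) ∩ (fun x : Fin 2 → ℝ => x 0 + x 1) ⁻¹' (Iio 1)) := by
    ext x; simp [simplex2, and_assoc]
  rw [this]
  exact (isOpen_Ioi.preimage h0).inter ((isOpen_Ioi.preimage h1).inter
    (isOpen_Iio.preimage (h0.add h1)))

lemma hlog {t : ℝ} (ht : 0 < t) : HasDerivAt (fun t => t * Real.log t - t) (Real.log t) t := by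
  have h := ((hasDerivAt_id t).mul (Real.hasDerivAt_log ht.ne')).sub (hasDerivAt_id t)
  exact h.congr_deriv (by simp [ht.ne'])

lemma hasFDerivAt_u (f : ℝ → ℝ) (d : ℝ) (y : Fin 2 → ℝ) (h0 : 0 < y 0) (h1 : 0 < y 1)
    (hs : y 0 + y 1 < 1) (hd : HasDerivAt f d (y 0 + y 1)) :
    HasFDerivAt (fun y => uGCP2 y + (1/2) * f (y 0 + y 1))
      ((1/2 : ℝ) • ((Real.log (y 0)) • (ContinuousLinearMap.proj 0 : (Fin 2 → ℝ) →L[ℝ] ℝ)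
        + (Real.log (y 1)) • (ContinuousLinearMap.proj 1 : (Fin 2 → ℝ) →L[ℝ] ℝ)
        + (Real.log (1 - y 0 - y 1)) • ((0 : (Fin 2 → ℝ) →L[ℝ] ℝ)
            - ContinuousLinearMap.proj 0 - ContinuousLinearMap.proj 1))
        + (1/2 : ℝ) • (d • ((ContinuousLinearMap.proj 0 : (Fin 2 → ℝ) →L[ℝ] ℝ)
            + ContinuousLinearMap.proj 1))) y := by
  have hz : (0:ℝ) < 1 - y 0 - y 1 := by linarith
  set p0 : (Fin 2 → ℝ) →L[ℝ] ℝ := ContinuousLinearMap.proj 0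
  set p1 : (Fin 2 → ℝ) →L[ℝ] ℝ := ContinuousLinearMap.proj 1
  have hy0 : HasFDerivAt (fun y : Fin 2 → ℝ => y 0) p0 y := p0.hasFDerivAt
  have hy1 : HasFDerivAt (fun y : Fin 2 → ℝ => y 1) p1 y := p1.hasFDerivAt
  have hz' : HasFDerivAt (fun y : Fin 2 → ℝ => 1 - y 0 - y 1) (0 - p0 - p1) y :=
    ((hasFDerivAt_const (1:ℝ) y).sub hy0).sub hy1
  have hh0 : HasFDerivAt (fun y : Fin 2 → ℝ => y 0 * Real.log (y 0) - y 0)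
      ((Real.log (y 0)) • p0) y := by have := (hlog h0).comp_hasFDerivAt y hy0; exact this
  have hh1 : HasFDerivAt (fun y : Fin 2 → ℝ => y 1 * Real.log (y 1) - y 1)
      ((Real.log (y 1)) • p1) y := by have := (hlog h1).comp_hasFDerivAt y hy1; exact this
  have hhz : HasFDerivAt (fun y : Fin 2 → ℝ =>
      (1 - y 0 - y 1) * Real.log (1 - y 0 - y 1) - (1 - y 0 - y 1))
      ((Real.log (1 - y 0 - y 1)) • (0 - p0 - p1)) y := by
        have := (hlog hz).comp_hasFDerivAt y hz'; exact this
  have hF : HasFDerivAt (fun y : Fin 2 → ℝ => f (y 0 + y 1)) (d • (p0 + p1)) y :=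
    hd.comp_hasFDerivAt y (hy0.add hy1)
  have H := (((hh0.add hh1).add hhz).const_mul (1/2 : ℝ)).add (hF.const_mul (1/2 : ℝ))
  have e : (fun y : Fin 2 → ℝ => uGCP2 y + (1/2) * f (y 0 + y 1)) = fun y =>
      (1/2 : ℝ) * ((y 0 * Real.log (y 0) - y 0 + (y 1 * Real.log (y 1) - y 1))
        + ((1 - y 0 - y 1) * Real.log (1 - y 0 - y 1) - (1 - y 0 - y 1))) + (1/2) * f (y 0 + y 1) := by
    funext y
    simp only [uGCP2]
    ring
  rw [e]
  exact H

lemma pd_u_eq (f : ℝ → ℝ) (j : Fin 2) (y : Fin 2 → ℝ) (h0 : 0 < y 0) (h1 : 0 < y 1)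
    (hs : y 0 + y 1 < 1) (hd : HasDerivAt f (deriv f (y 0 + y 1)) (y 0 + y 1)) :
    pd j (fun y => uGCP2 y + (1/2) * f (y 0 + y 1)) y =
      (1/2) * (Real.log (y j) - Real.log (1 - y 0 - y 1) + deriv f (y 0 + y 1)) := by
  rw [pd, (hasFDerivAt_u f _ y h0 h1 hs hd).fderiv]
  fin_cases j <;>
    simp [ContinuousLinearMap.proj_apply, Pi.single_apply, Fin.ext_iff] <;> ring

lemma hasFDerivAt_g (f : ℝ → ℝ) (b : ℝ) (k : Fin 2) (y : Fin 2 → ℝ) (hk : 0 < y k)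
    (h0 : 0 < y 0) (h1 : 0 < y 1) (hs : y 0 + y 1 < 1)
    (hd2 : HasDerivAt (deriv f) b (y 0 + y 1)) :
    HasFDerivAt (fun y : Fin 2 → ℝ =>
        (1/2) * (Real.log (y k) - Real.log (1 - y 0 - y 1) + deriv f (y 0 + y 1)))
      ((1/2 : ℝ) • (((y k)⁻¹ • (ContinuousLinearMap.proj k : (Fin 2 → ℝ) →L[ℝ] ℝ)
        - (1 - y 0 - y 1)⁻¹ • ((0 : (Fin 2 → ℝ) →L[ℝ] ℝ)
            - ContinuousLinearMap.proj 0 - ContinuousLinearMap.proj 1))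
        + b • ((ContinuousLinearMap.proj 0 : (Fin 2 → ℝ) →L[ℝ] ℝ)
            + ContinuousLinearMap.proj 1))) y := by
  have hz : (0:ℝ) < 1 - y 0 - y 1 := by linarith
  set p0 : (Fin 2 → ℝ) →L[ℝ] ℝ := ContinuousLinearMap.proj 0
  set p1 : (Fin 2 → ℝ) →L[ℝ] ℝ := ContinuousLinearMap.proj 1
  set pk : (Fin 2 → ℝ) →L[ℝ] ℝ := ContinuousLinearMap.proj k
  have hy0 : HasFDerivAt (fun y : Fin 2 → ℝ => y 0) p0 y := p0.hasFDerivAt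
  have hy1 : HasFDerivAt (fun y : Fin 2 → ℝ => y 1) p1 y := p1.hasFDerivAt
  have hyk : HasFDerivAt (fun y : Fin 2 → ℝ => y k) pk y := pk.hasFDerivAt
  have hz' : HasFDerivAt (fun y : Fin 2 → ℝ => 1 - y 0 - y 1) (0 - p0 - p1) y :=
    ((hasFDerivAt_const (1:ℝ) y).sub hy0).sub hy1
  have hL0 : HasFDerivAt (fun y : Fin 2 → ℝ => Real.log (y k)) ((y k)⁻¹ • pk) y := by
    have := (Real.hasDerivAt_log hk.ne').comp_hasFDerivAt y hyk
    exact this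
  have hLz : HasFDerivAt (fun y : Fin 2 → ℝ => Real.log (1 - y 0 - y 1))
      ((1 - y 0 - y 1)⁻¹ • (0 - p0 - p1)) y := by
    have := (Real.hasDerivAt_log hz.ne').comp_hasFDerivAt y hz'
    exact this
  have hD : HasFDerivAt (fun y : Fin 2 → ℝ => deriv f (y 0 + y 1)) (b • (p0 + p1)) y :=
    by have := hd2.comp_hasFDerivAt y (hy0.add hy1); exact this
  exact ((hL0.sub hLz).add hD).const_mul (1/2 : ℝ)

lemma hess_entry (f : ℝ → ℝ) (I : Set ℝ) (hI : IsOpen I) (hI1 : Ioo (0:ℝ) 1 ⊆ I)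
    (hf : ContDiffOn ℝ (⊤ : ℕ∞) f I) (x : Fin 2 → ℝ) (hx : x ∈ simplex2) (i j : Fin 2) :
    Hess (fun y => uGCP2 y + (1/2) * f (y 0 + y 1)) x i j =
      (1/2) * ((if i = j then (x j)⁻¹ else 0) + (1 - x 0 - x 1)⁻¹
        + deriv (deriv f) (x 0 + x 1)) := by
  obtain ⟨h0, h1, hs⟩ := hx
  have hdf : ContDiffOn ℝ (⊤:ℕ∞) (deriv f) I :=
    hf.deriv_of_isOpen hI (by exact_mod_cast le_top)
  have hmem : ∀ y : Fin 2 → ℝ, y ∈ simplex2 → y 0 + y 1 ∈ I := fun y hy =>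
    hI1 ⟨by linarith [hy.1, hy.2.1], hy.2.2⟩
  have hd1 : ∀ y : Fin 2 → ℝ, y ∈ simplex2 →
      HasDerivAt f (deriv f (y 0 + y 1)) (y 0 + y 1) := fun y hy =>
    (((hf.differentiableOn (by simp)).differentiableAt
      (hI.mem_nhds (hmem y hy)))).hasDerivAt
  have hd2 : HasDerivAt (deriv f) (deriv (deriv f) (x 0 + x 1)) (x 0 + x 1) :=
    (((hdf.differentiableOn (by simp)).differentiableAt
      (hI.mem_nhds (hmem x ⟨h0, h1, hs⟩)))).hasDerivAt
  have hev : pd j (fun y => uGCP2 y + (1/2) * f (y 0 + y 1)) =ᶠ[nhds x]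
      (fun y : Fin 2 → ℝ =>
        (1/2) * (Real.log (y j) - Real.log (1 - y 0 - y 1) + deriv f (y 0 + y 1))) := by
    filter_upwards [isOpen_simplex2.mem_nhds ⟨h0, h1, hs⟩] with y hy
    exact pd_u_eq f j y hy.1 hy.2.1 hy.2.2 (hd1 y hy)
  have hxk : 0 < x j := by fin_cases j <;> assumption
  have hG := hasFDerivAt_g f (deriv (deriv f) (x 0 + x 1)) j x hxk h0 h1 hs hd2
  show pd i (pd j fun y => uGCP2 y + 1 / 2 * f (y 0 + y 1)) x = _
  rw [pd, hev.fderiv_eq, hG.fderiv]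
  fin_cases i <;> fin_cases j <;>
    simp [ContinuousLinearMap.proj_apply, Pi.single_apply, Fin.ext_iff] <;> ring

theorem stmt10 (f : ℝ → ℝ) (I : Set ℝ) (hI : IsOpen I) (hI1 : Ioo (0:ℝ) 1 ⊆ I)
    (hf : ContDiffOn ℝ (⊤ : ℕ∞) f I) :
    (∀ x ∈ simplex2,
      (Hess (fun y => uGCP2 y + (1/2) * f (y 0 + y 1)) x).det =
        (1 + (x 0 + x 1) * (1 - x 0 - x 1) * deriv (deriv f) (x 0 + x 1)) /
          (4 * x 0 * x 1 * (1 - x 0 - x 1))) ∧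
    ((∀ x ∈ simplex2, (Hess (fun y => uGCP2 y + (1/2) * f (y 0 + y 1)) x).PosDef) ↔
      ∀ t ∈ Ioo (0:ℝ) 1, 0 < 1 + t * (1 - t) * deriv (deriv f) t) := by
  have hdet : ∀ x ∈ simplex2,
      (Hess (fun y => uGCP2 y + (1/2) * f (y 0 + y 1)) x).det =
        (1 + (x 0 + x 1) * (1 - x 0 - x 1) * deriv (deriv f) (x 0 + x 1)) /
          (4 * x 0 * x 1 * (1 - x 0 - x 1)) := by
    intro x hx
    obtain ⟨h0, h1, hs⟩ := hx
    have hz : (0:ℝ) < 1 - x 0 - x 1 := by linarith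
    have hE := hess_entry f I hI hI1 hf x ⟨h0, h1, hs⟩
    rw [Matrix.det_fin_two, hE 0 0, hE 0 1, hE 1 0, hE 1 1]
    simp only [if_pos rfl, if_neg (show (0:Fin 2) ≠ 1 by decide), if_neg (show (1:Fin 2) ≠ 0 by decide), reduceIte]
    field_simp
    ring
  refine ⟨hdet, ?_, ?_⟩
  · -- posdef everywhere → condition
    intro hpd t ht
    set x : Fin 2 → ℝ := fun _ => t/2 with hxdef
    have hx : x ∈ simplex2 := by
      refine ⟨by show (0:ℝ) < t/2; linarith [ht.1], by show (0:ℝ) < t/2; linarith [ht.1], ?_⟩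
      show t/2 + t/2 < 1; linarith [ht.2]
    have hdp := (hpd x hx).det_pos
    rw [hdet x hx] at hdp
    have hdp' : 0 < (1 + (t/2 + t/2) * (1 - t/2 - t/2) * deriv (deriv f) (t/2 + t/2)) /
        (4 * (t/2) * (t/2) * (1 - t/2 - t/2)) := hdp
    have hB : (0:ℝ) < 4 * (t/2) * (t/2) * (1 - t/2 - t/2) := by
      have e : 4 * (t/2) * (t/2) * (1 - t/2 - t/2) = t * t * (1 - t) := by ring
      rw [e]; exact mul_pos (mul_pos ht.1 ht.1) (by linarith [ht.2])
    have hA := mul_pos hdp' hB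
    rw [div_mul_cancel₀ _ hB.ne'] at hA
    have e1 : t/2 + t/2 = t := by ring
    rw [e1] at hA
    have e2 : 1 - t/2 - t/2 = 1 - t := by ring
    rw [e2] at hA
    exact hA
  · -- condition → posdef everywhere
    intro hcond x hx
    obtain ⟨h0, h1, hs⟩ := hx
    have hz : (0:ℝ) < 1 - x 0 - x 1 := by linarith
    have hE := hess_entry f I hI hI1 hf x ⟨h0, h1, hs⟩
    set b := deriv (deriv f) (x 0 + x 1) with hb
    have hkey : 0 < 1 + (x 0 + x 1) * (1 - x 0 - x 1) * b := by
      simpa [sub_sub, ← hb] using hcond (x 0 + x 1) ⟨by linarith, hs⟩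
    rw [posDef_iff_dotProduct_mulVec]
    constructor
    · -- Hermitian
      ext i j
      simp only [Matrix.conjTranspose_apply, star_trivial]
      rw [hE i j, hE j i]
      fin_cases i <;> fin_cases j <;> simp
    · intro v hv
      have hvv : v 0 ≠ 0 ∨ v 1 ≠ 0 := by
        by_contra h
        push_neg at h
        apply hv
        funext i
        fin_cases i <;> simp [h.1, h.2]
      have hQ : dotProduct (star v) ((Hess (fun y => uGCP2 y + (1/2) * f (y 0 + y 1)) x) *ᵥ v)
          = ((1 - x 0 - x 1) * (x 1 * v 0 - x 0 * v 1)^2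
            + x 0 * x 1 * (1 + (x 0 + x 1) * (1 - x 0 - x 1) * b) * (v 0 + v 1)^2)
            / (2 * x 0 * x 1 * (1 - x 0 - x 1) * (x 0 + x 1)) := by
        simp only [dotProduct, Matrix.mulVec, Fin.sum_univ_two, star_trivial, Pi.star_apply]
        rw [hE 0 0, hE 0 1, hE 1 0, hE 1 1]
        simp only [if_pos rfl, if_neg (show (0:Fin 2) ≠ 1 by decide), if_neg (show (1:Fin 2) ≠ 0 by decide), reduceIte]
        field_simp
        ring
      rw [hQ]
      apply div_pos
      · rcases eq_or_ne (v 0 + v 1) 0 with hsum | hsum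
        · have hv0 : v 0 ≠ 0 := by
            rcases hvv with h | h
            · exact h
            · intro h0'; apply h; linarith [hsum]
          have hrw : x 1 * v 0 - x 0 * v 1 = (x 0 + x 1) * v 0 := by
            have : v 1 = -v 0 := by linarith
            rw [this]; ring
          rw [hsum, hrw]
          have hne : (x 0 + x 1) * v 0 ≠ 0 := mul_ne_zero (by positivity) hv0
          have h2 : 0 < ((x 0 + x 1) * v 0)^2 :=
            lt_of_le_of_ne (sq_nonneg _) (Ne.symm (pow_ne_zero 2 hne))
          nlinarith [mul_pos hz h2]
        · have h2 : 0 < (v 0 + v 1)^2 := by positivity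
          nlinarith [sq_nonneg (x 1 * v 0 - x 0 * v 1), mul_pos (mul_pos h0 h1) (mul_pos hkey h2)]
      · have : 0 < x 0 + x 1 := by linarith
        positivity
end

section
/- Let Δ° = {(x₁,x₂) ∈ ℝ² : x₁ > 0, x₂ > 0, x₁ + x₂ < 1}, let u_G(x₁,x₂) = (1/2)(x₁ log x₁ − x₁ + x₂ log x₂ − x₂ + (1−x₁−x₂) log(1−x₁−x₂) − (1−x₁−x₂)), and let f be a smooth real-valued function on an open interval containing (0,1) satisfying 1 + t(1−t) f''(t) > 0 for all t ∈ (0,1). Then every critical point (x₁,x₂) ∈ Δ° of the function det Hess(u_G + (1/2) f(x₁+x₂)) satisfies x₁ = x₂. -/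
open Real Set Topology Filter Matrix

/- auxiliary defs -/
noncomputable def prj (i : Fin 2) : (Fin 2 → ℝ) →L[ℝ] ℝ :=
  ContinuousLinearMap.proj (R := ℝ) (φ := fun _ : Fin 2 => ℝ) i

lemma hasF_coord (i : Fin 2) (y : Fin 2 → ℝ) :
    HasFDerivAt (fun y : Fin 2 → ℝ => y i) (prj i) y := (prj i).hasFDerivAt

noncomputable def myU (f : ℝ → ℝ) : (Fin 2 → ℝ) → ℝ :=
  fun z => uGCP2 z + (1/2) * f (z 0 + z 1)

noncomputable def myP (f : ℝ → ℝ) (j : Fin 2) : (Fin 2 → ℝ) → ℝ := fun y =>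
  (1/2) * (Real.log (y j) - Real.log (1 - y 0 - y 1) + deriv f (y 0 + y 1))

noncomputable def myH (f : ℝ → ℝ) (i j : Fin 2) : (Fin 2 → ℝ) → ℝ := fun y =>
  (1/2) * ((if i = j then (y i)⁻¹ else 0) + (1 - y 0 - y 1)⁻¹ + deriv (deriv f) (y 0 + y 1))

noncomputable def myAB (f : ℝ → ℝ) : (Fin 2 → ℝ) → ℝ := fun y =>
  (1 + (y 0 + y 1) * ((1 - (y 0 + y 1))⁻¹ + deriv (deriv f) (y 0 + y 1))) * (4 * y 0 * y 1)⁻¹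

lemma pdU_eq (f : ℝ → ℝ)
    (hf1 : ∀ t ∈ Ioo (0:ℝ) 1, HasDerivAt f (deriv f t) t)
    {y : Fin 2 → ℝ} (hy : y ∈ simplex2) (j : Fin 2) :
    pd j (myU f) y = myP f j y := by
  obtain ⟨ha, hb, hab⟩ := hy
  have ha0 : y 0 ≠ 0 := ne_of_gt ha
  have hb0 : y 1 ≠ 0 := ne_of_gt hb
  have hwpos : (0:ℝ) < 1 - y 0 - y 1 := by linarith
  have hw0 : 1 - y 0 - y 1 ≠ 0 := ne_of_gt hwpos
  have hs : y 0 + y 1 ∈ Ioo (0:ℝ) 1 := ⟨by linarith, by linarith⟩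
  have h0 := hasF_coord 0 y
  have h1 := hasF_coord 1 y
  have hwF : HasFDerivAt (fun y : Fin 2 → ℝ => 1 - y 0 - y 1) ((0 - prj 0) - prj 1) y :=
    ((hasFDerivAt_const (1:ℝ) y).sub h0).sub h1
  have hA := h0.mul (h0.log ha0)
  have hC := h1.mul (h1.log hb0)
  have hE := hwF.mul (hwF.log hw0)
  have hG := (((((hA.sub h0).add hC).sub h1).add hE).sub hwF).const_mul (1/2 : ℝ)
  have hσ : HasFDerivAt (fun y : Fin 2 → ℝ => y 0 + y 1) (prj 0 + prj 1) y := h0.add h1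
  have hfc := ((hf1 _ hs).comp_hasFDerivAt y hσ).const_mul (1/2 : ℝ)
  have hU : HasFDerivAt (myU f) _ y := hG.add hfc
  have hfd : fderiv ℝ (myU f) y = _ := hU.fderiv
  fin_cases j <;>
    · simp only [pd, hfd, myP, ContinuousLinearMap.add_apply, ContinuousLinearMap.sub_apply,
        ContinuousLinearMap.smul_apply, ContinuousLinearMap.zero_apply, prj,
        ContinuousLinearMap.proj_apply, smul_eq_mul, Pi.single_apply]
      norm_num
      field_simp
      ring

lemma pdP_eq (f : ℝ → ℝ)
    (hf2 : ∀ t ∈ Ioo (0:ℝ) 1, HasDerivAt (deriv f) (deriv (deriv f) t) t)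
    {y : Fin 2 → ℝ} (hy : y ∈ simplex2) (i j : Fin 2) :
    pd i (myP f j) y = myH f i j y := by
  obtain ⟨ha, hb, hab⟩ := hy
  have ha0 : y 0 ≠ 0 := ne_of_gt ha
  have hb0 : y 1 ≠ 0 := ne_of_gt hb
  have hwpos : (0:ℝ) < 1 - y 0 - y 1 := by linarith
  have hw0 : 1 - y 0 - y 1 ≠ 0 := ne_of_gt hwpos
  have hs : y 0 + y 1 ∈ Ioo (0:ℝ) 1 := ⟨by linarith, by linarith⟩
  have h0 := hasF_coord 0 y
  have h1 := hasF_coord 1 y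
  have hyj : y j ≠ 0 := by
    fin_cases j
    · exact ha0
    · exact hb0
  have hwF : HasFDerivAt (fun y : Fin 2 → ℝ => 1 - y 0 - y 1) ((0 - prj 0) - prj 1) y :=
    ((hasFDerivAt_const (1:ℝ) y).sub h0).sub h1
  have hσ : HasFDerivAt (fun y : Fin 2 → ℝ => y 0 + y 1) (prj 0 + prj 1) y := h0.add h1
  have hP : HasFDerivAt (myP f j) _ y :=
    ((((hasF_coord j y).log hyj).sub (hwF.log hw0)).add
      ((hf2 _ hs).comp_hasFDerivAt y hσ)).const_mul (1/2 : ℝ)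
  have hfd : fderiv ℝ (myP f j) y = _ := hP.fderiv
  fin_cases i <;> fin_cases j <;>
    · simp only [pd, hfd, myH, ContinuousLinearMap.add_apply, ContinuousLinearMap.sub_apply,
        ContinuousLinearMap.smul_apply, ContinuousLinearMap.zero_apply, prj,
        ContinuousLinearMap.proj_apply, smul_eq_mul, Pi.single_apply]
      norm_num

lemma det_eq (f : ℝ → ℝ)
    (hf1 : ∀ t ∈ Ioo (0:ℝ) 1, HasDerivAt f (deriv f t) t)
    (hf2 : ∀ t ∈ Ioo (0:ℝ) 1, HasDerivAt (deriv f) (deriv (deriv f) t) t)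
    {y : Fin 2 → ℝ} (hy : y ∈ simplex2) :
    (Hess (myU f) y).det = myAB f y := by
  have hent : ∀ i j : Fin 2, pd i (pd j (myU f)) y = myH f i j y := by
    intro i j
    have hev : pd j (myU f) =ᶠ[𝓝 y] myP f j :=
      Filter.eventuallyEq_of_mem (isOpen_simplex2.mem_nhds hy)
        (fun z hz => pdU_eq f hf1 hz j)
    have h2 : fderiv ℝ (pd j (myU f)) y = fderiv ℝ (myP f j) y := hev.fderiv_eq
    have h3 : pd i (pd j (myU f)) y = fderiv ℝ (myP f j) y (Pi.single i 1) := by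
      rw [show pd i (pd j (myU f)) y
          = fderiv ℝ (pd j (myU f)) y (Pi.single i 1) from rfl, h2]
    rw [h3]
    exact pdP_eq f hf2 hy i j
  obtain ⟨ha, hb, hab⟩ := hy
  have ha0 : y 0 ≠ 0 := ne_of_gt ha
  have hb0 : y 1 ≠ 0 := ne_of_gt hb
  have hwpos : (0:ℝ) < 1 - y 0 - y 1 := by linarith
  have hw0 : 1 - y 0 - y 1 ≠ 0 := ne_of_gt hwpos
  have hw0' : 1 - (y 0 + y 1) ≠ 0 := by intro h; apply hw0; linarith
  have hdet : (Hess (myU f) y).det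
      = myH f 0 0 y * myH f 1 1 y - myH f 0 1 y * myH f 1 0 y := by
    rw [Matrix.det_fin_two]
    simp only [Hess, Matrix.of_apply, hent]
  rw [hdet]
  simp only [myH, myAB]
  norm_num
  have hww : (1 - y 0 - y 1) = (1 - (y 0 + y 1)) := by ring
  rw [hww]
  field_simp
  ring

theorem stmt11 (f : ℝ → ℝ) (I : Set ℝ) (hI : IsOpen I) (hI1 : Ioo (0:ℝ) 1 ⊆ I)
    (hf : ContDiffOn ℝ (⊤ : ℕ∞) f I)
    (hpd : ∀ t ∈ Ioo (0:ℝ) 1, 0 < 1 + t * (1 - t) * deriv (deriv f) t)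
    (x : Fin 2 → ℝ) (hx : x ∈ simplex2)
    (hcrit : fderiv ℝ
      (fun y => (Hess (fun z => uGCP2 z + (1/2) * f (z 0 + z 1)) y).det) x = 0) :
    x 0 = x 1 := by
  have hfd1 : ContDiffOn ℝ (⊤:ℕ∞) (deriv f) I :=
    hf.deriv_of_isOpen hI (by exact_mod_cast le_top)
  have hfd2 : ContDiffOn ℝ (⊤:ℕ∞) (deriv (deriv f)) I :=
    hfd1.deriv_of_isOpen hI (by exact_mod_cast le_top)
  have hf1 : ∀ t ∈ Ioo (0:ℝ) 1, HasDerivAt f (deriv f t) t := fun t ht =>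
    ((hf.differentiableOn (by simp)).differentiableAt (hI.mem_nhds (hI1 ht))).hasDerivAt
  have hf2 : ∀ t ∈ Ioo (0:ℝ) 1, HasDerivAt (deriv f) (deriv (deriv f) t) t := fun t ht =>
    ((hfd1.differentiableOn (by simp)).differentiableAt (hI.mem_nhds (hI1 ht))).hasDerivAt
  have hf3' : ∀ t ∈ Ioo (0:ℝ) 1, HasDerivAt (deriv (deriv f)) (deriv (deriv (deriv f)) t) t :=
    fun t ht =>
    ((hfd2.differentiableOn (by simp)).differentiableAt (hI.mem_nhds (hI1 ht))).hasDerivAt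
  obtain ⟨ha, hb, hab⟩ := hx
  have hx' : x ∈ simplex2 := ⟨ha, hb, hab⟩
  have hs : x 0 + x 1 ∈ Ioo (0:ℝ) 1 := ⟨by linarith, by linarith⟩
  have hwpos : (0:ℝ) < 1 - (x 0 + x 1) := by linarith
  have hcrit2 : fderiv ℝ (fun y => (Hess (myU f) y).det) x = 0 := hcrit
  have hev : (fun y => (Hess (myU f) y).det) =ᶠ[𝓝 x] myAB f :=
    Filter.eventuallyEq_of_mem (isOpen_simplex2.mem_nhds hx')
      (fun z hz => det_eq f hf1 hf2 hz)
  have hAB0 : fderiv ℝ (myAB f) x = 0 := hev.symm.fderiv_eq.trans hcrit2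
  -- build the explicit derivative of myAB at x
  have hf3 := hf3' (x 0 + x 1) hs
  have h1d : HasDerivAt (fun t : ℝ => 1 - t) (-1 : ℝ) (x 0 + x 1) := by
    simpa using (hasDerivAt_id (x 0 + x 1)).const_sub 1
  have hinv := h1d.inv (ne_of_gt hwpos)
  have hsum := hinv.add hf3
  have hmul := (hasDerivAt_id (x 0 + x 1)).mul hsum
  have hφ := hmul.const_add (1:ℝ)
  have hσ : HasFDerivAt (fun y : Fin 2 → ℝ => y 0 + y 1) (prj 0 + prj 1) x :=
    (hasF_coord 0 x).add (hasF_coord 1 x)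
  have hA := hφ.comp_hasFDerivAt x hσ
  have hm := ((hasF_coord 0 x).const_mul (4:ℝ)).mul (hasF_coord 1 x)
  have hm0 : 4 * x 0 * x 1 ≠ 0 := by positivity
  have hBinv := (hasDerivAt_inv hm0).comp_hasFDerivAt x hm
  have hABf : HasFDerivAt (myAB f) _ x := hA.mul hBinv
  have hfdAB : fderiv ℝ (myAB f) x = _ := hABf.fderiv
  rw [hAB0] at hfdAB
  have e0 := congrArg (fun L : (Fin 2 → ℝ) →L[ℝ] ℝ => L (Pi.single 0 1)) hfdAB
  have e1 := congrArg (fun L : (Fin 2 → ℝ) →L[ℝ] ℝ => L (Pi.single 1 1)) hfdAB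
  simp only [ContinuousLinearMap.zero_apply, ContinuousLinearMap.add_apply,
    ContinuousLinearMap.smul_apply, prj, ContinuousLinearMap.proj_apply,
    smul_eq_mul, Pi.single_apply, Function.comp] at e0 e1
  norm_num at e0 e1
  have hApos : 0 < 1 + (x 0 + x 1) * ((1 - (x 0 + x 1))⁻¹ + deriv (deriv f) (x 0 + x 1)) := by
    have key2 : (1 + (x 0 + x 1) * ((1 - (x 0 + x 1))⁻¹ + deriv (deriv f) (x 0 + x 1)))
        * (1 - (x 0 + x 1))
        = 1 + (x 0 + x 1) * (1 - (x 0 + x 1)) * deriv (deriv f) (x 0 + x 1) := by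
      field_simp
      ring
    have hp := hpd (x 0 + x 1) hs
    rw [← key2] at hp
    rcases mul_pos_iff.mp hp with ⟨h, _⟩ | ⟨_, h⟩
    · exact h
    · linarith
  have hKpos : (0:ℝ) < ((4 * x 0 * x 1) ^ 2)⁻¹ := by positivity
  have key : (1 + (x 0 + x 1) * ((1 - (x 0 + x 1))⁻¹ + deriv (deriv f) (x 0 + x 1)))
        * (((4 * x 0 * x 1) ^ 2)⁻¹ * (x 1 * 4))
      = (1 + (x 0 + x 1) * ((1 - (x 0 + x 1))⁻¹ + deriv (deriv f) (x 0 + x 1)))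
        * (((4 * x 0 * x 1) ^ 2)⁻¹ * (4 * x 0)) := by linarith
  have k1 := mul_left_cancel₀ (ne_of_gt hApos) key
  have k2 := mul_left_cancel₀ (ne_of_gt hKpos) k1
  linarith
end

section
/- Let Δ° = {(x₁,x₂) ∈ ℝ² : x₁ > 0, x₂ > 0, x₁ + x₂ < 1} and u_G(x₁,x₂) = (1/2)(x₁ log x₁ − x₁ + x₂ log x₂ − x₂ + (1−x₁−x₂) log(1−x₁−x₂) − (1−x₁−x₂)). There exists a smooth function f on an open neighbourhood of [0,1] with 1 + t(1−t) f''(t) > 0 for all t ∈ (0,1), such that every point (t/2, t/2) with t ∈ [1/3, 2/3] is a critical point of det Hess(u_G + (1/2) f(x₁+x₂)) in Δ°. -/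
open Real Set Topology Filter Matrix

namespace Stmt13Aux

open scoped ContDiff

/-- Smooth cutoff: `1` on `[3/10, 7/10]`, `0` outside `(1/4, 3/4)`. -/
noncomputable def phi (t : ℝ) : ℝ :=
  Real.smoothTransition (20 * t - 5) * Real.smoothTransition (15 - 20 * t)

lemma phi_nonneg (t : ℝ) : 0 ≤ phi t :=
  mul_nonneg (Real.smoothTransition.nonneg _) (Real.smoothTransition.nonneg _)

lemma phi_le_one (t : ℝ) : phi t ≤ 1 :=
  mul_le_one₀ (Real.smoothTransition.le_one _) (Real.smoothTransition.nonneg _)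
    (Real.smoothTransition.le_one _)

lemma phi_eq_one {t : ℝ} (h1 : 3/10 ≤ t) (h2 : t ≤ 7/10) : phi t = 1 := by
  unfold phi
  rw [Real.smoothTransition.one_of_one_le (by linarith),
    Real.smoothTransition.one_of_one_le (by linarith), mul_one]

lemma phi_eq_zero_left {t : ℝ} (h : t ≤ 1/4) : phi t = 0 := by
  unfold phi
  rw [Real.smoothTransition.zero_of_nonpos (by linarith), zero_mul]

lemma phi_eq_zero_right {t : ℝ} (h : 3/4 ≤ t) : phi t = 0 := by
  unfold phi
  have : Real.smoothTransition (15 - 20 * t) = 0 :=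
    Real.smoothTransition.zero_of_nonpos (by linarith)
  rw [this, mul_zero]

/-- The second derivative of our `f`. -/
noncomputable def hh (t : ℝ) : ℝ := phi t * (t - t⁻¹ - (1 - t)⁻¹)

lemma contDiff_hh : ContDiff ℝ ∞ hh := by
  rw [contDiff_iff_contDiffAt]
  intro t
  rcases lt_or_ge t (1/4) with h4 | h4
  · refine (contDiffAt_const (c := (0:ℝ))).congr_of_eventuallyEq ?_
    refine Filter.eventuallyEq_of_mem (Iio_mem_nhds h4) (fun s hs => ?_)
    simp only [hh, phi_eq_zero_left (le_of_lt hs), zero_mul]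
  rcases lt_or_ge (3/4 : ℝ) t with h5 | h5
  · refine (contDiffAt_const (c := (0:ℝ))).congr_of_eventuallyEq ?_
    refine Filter.eventuallyEq_of_mem (Ioi_mem_nhds h5) (fun s hs => ?_)
    simp only [hh, phi_eq_zero_right (le_of_lt hs), zero_mul]
  · have h0 : t ≠ 0 := by norm_num at h4 ⊢; linarith
    have h1 : (1 : ℝ) - t ≠ 0 := by norm_num at h5 ⊢; intro hc; linarith
    have hst : ContDiff ℝ ∞ (fun t : ℝ => Real.smoothTransition (20 * t - 5)) :=
      Real.smoothTransition.contDiff.comp ((contDiff_const.mul contDiff_id).sub contDiff_const)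
    have hst' : ContDiff ℝ ∞ (fun t : ℝ => Real.smoothTransition (15 - 20 * t)) :=
      Real.smoothTransition.contDiff.comp (contDiff_const.sub (contDiff_const.mul contDiff_id))
    exact ((hst.contDiffAt.mul hst'.contDiffAt).mul
      ((contDiffAt_id.sub (contDiffAt_id.inv h0)).sub
        ((contDiffAt_const.sub contDiffAt_id).inv h1)))

lemma continuous_hh : Continuous hh := contDiff_hh.continuous

/-- First antiderivative. -/
noncomputable def HH (t : ℝ) : ℝ := ∫ r in (0:ℝ)..t, hh r

lemma hasDerivAt_HH (t : ℝ) : HasDerivAt HH (hh t) t :=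
  intervalIntegral.integral_hasDerivAt_right
    (continuous_hh.intervalIntegrable _ _)
    (continuous_hh.stronglyMeasurableAtFilter _ _)
    continuous_hh.continuousAt

lemma continuous_HH : Continuous HH := by
  have : Differentiable ℝ HH := fun t => (hasDerivAt_HH t).differentiableAt
  exact this.continuous

/-- Our function `f`. -/
noncomputable def ff (t : ℝ) : ℝ := ∫ r in (0:ℝ)..t, HH r

lemma hasDerivAt_ff (t : ℝ) : HasDerivAt ff (HH t) t :=
  intervalIntegral.integral_hasDerivAt_right
    (continuous_HH.intervalIntegrable _ _)
    (continuous_HH.stronglyMeasurableAtFilter _ _)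
    continuous_HH.continuousAt

lemma deriv_ff : deriv ff = HH := funext fun t => (hasDerivAt_ff t).deriv

lemma deriv_HH : deriv HH = hh := funext fun t => (hasDerivAt_HH t).deriv

lemma contDiff_ff : ContDiff ℝ ∞ ff := by
  rw [contDiff_infty_iff_deriv]
  refine ⟨fun t => (hasDerivAt_ff t).differentiableAt, ?_⟩
  rw [deriv_ff, contDiff_infty_iff_deriv]
  exact ⟨fun t => (hasDerivAt_HH t).differentiableAt, deriv_HH ▸ contDiff_hh⟩

lemma pos_cond {t : ℝ} (ht0 : 0 < t) (ht1 : t < 1) : 0 < 1 + t * (1 - t) * hh t := by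
  have h0 : t ≠ 0 := ne_of_gt ht0
  have h1 : (1:ℝ) - t ≠ 0 := by intro hc; nlinarith
  have e1 : t * (1 - t) * hh t = phi t * (t^2 * (1 - t)) - phi t := by
    unfold hh; field_simp; ring
  have hb : 0 < t^2 * (1 - t) := by
    have h1t : (0:ℝ) < 1 - t := by linarith
    positivity
  rcases eq_or_lt_of_le (phi_le_one t) with he | hl
  · rw [e1, he]; nlinarith
  · have := phi_nonneg t
    rw [e1]; nlinarith [mul_nonneg this hb.le]

/-! ### The geometric computation -/

/-- Convenient abbreviation for coordinate projections. -/
noncomputable def e (i : Fin 2) : (Fin 2 → ℝ) →L[ℝ] ℝ :=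
  ContinuousLinearMap.proj i

lemma projHasF (i : Fin 2) (x : Fin 2 → ℝ) :
    HasFDerivAt (fun z : Fin 2 → ℝ => z i) (e i) x :=
  hasFDerivAt_apply i x

lemma open_simplex : IsOpen simplex2 := by
  have : simplex2 = ((fun x : Fin 2 → ℝ => x 0) ⁻¹' Ioi 0) ∩
      (((fun x : Fin 2 → ℝ => x 1) ⁻¹' Ioi 0) ∩
       ((fun x : Fin 2 → ℝ => x 0 + x 1) ⁻¹' Iio 1)) := by
    ext x; simp only [simplex2, Set.mem_setOf_eq, Set.mem_inter_iff, Set.mem_preimage,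
      Set.mem_Ioi, Set.mem_Iio]
  rw [this]
  exact (isOpen_Ioi.preimage (continuous_apply 0)).inter
    ((isOpen_Ioi.preimage (continuous_apply 1)).inter
      (isOpen_Iio.preimage ((continuous_apply 0).add (continuous_apply 1))))

/-- The potential. -/
noncomputable def uu : (Fin 2 → ℝ) → ℝ := fun z => uGCP2 z + (1/2) * ff (z 0 + z 1)

/-- The partial derivatives of `uu`. -/
noncomputable def PP (j : Fin 2) : (Fin 2 → ℝ) → ℝ := fun x =>
  (1/2) * (Real.log (x j) - Real.log (1 - x 0 - x 1) + HH (x 0 + x 1))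

lemma hasFDerivAt_uu {x : Fin 2 → ℝ} (hx : x ∈ simplex2) :
    HasFDerivAt uu
      ((1/2 : ℝ) • ((((((Real.log (x 0) + 1) • e 0 - e 0) + (Real.log (x 1) + 1) • e 1) - e 1)
          + (Real.log (1 - x 0 - x 1) + 1) • ((0 : (Fin 2 → ℝ) →L[ℝ] ℝ) - e 0 - e 1))
          - ((0 : (Fin 2 → ℝ) →L[ℝ] ℝ) - e 0 - e 1))
        + (1/2 : ℝ) • (HH (x 0 + x 1) • (e 0 + e 1))) x := by
  obtain ⟨h0, h1, hs⟩ := hx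
  have hw : (0:ℝ) < 1 - x 0 - x 1 := by linarith
  have hW : HasFDerivAt (fun z : Fin 2 → ℝ => 1 - z 0 - z 1)
      ((0 : (Fin 2 → ℝ) →L[ℝ] ℝ) - e 0 - e 1) x :=
    ((hasFDerivAt_const (1:ℝ) x).sub (projHasF 0 x)).sub (projHasF 1 x)
  have hS : HasFDerivAt (fun z : Fin 2 → ℝ => z 0 + z 1) (e 0 + e 1) x :=
    (projHasF 0 x).add (projHasF 1 x)
  have h1' : HasFDerivAt (fun z : Fin 2 → ℝ => z 0 * Real.log (z 0))
      ((Real.log (x 0) + 1) • e 0) x :=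
    by have := (Real.hasDerivAt_mul_log h0.ne').comp_hasFDerivAt x (projHasF 0 x); exact this
  have h2' : HasFDerivAt (fun z : Fin 2 → ℝ => z 1 * Real.log (z 1))
      ((Real.log (x 1) + 1) • e 1) x :=
    by have := (Real.hasDerivAt_mul_log h1.ne').comp_hasFDerivAt x (projHasF 1 x); exact this
  have h3' : HasFDerivAt (fun z : Fin 2 → ℝ => (1 - z 0 - z 1) * Real.log (1 - z 0 - z 1))
      ((Real.log (1 - x 0 - x 1) + 1) • ((0 : (Fin 2 → ℝ) →L[ℝ] ℝ) - e 0 - e 1)) x :=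
    by have := (Real.hasDerivAt_mul_log hw.ne').comp_hasFDerivAt x hW; exact this
  have hf' : HasFDerivAt (fun z : Fin 2 → ℝ => ff (z 0 + z 1))
      (HH (x 0 + x 1) • (e 0 + e 1)) x :=
    by have := (hasDerivAt_ff (x 0 + x 1)).comp_hasFDerivAt x hS; exact this
  exact ((((((h1'.sub (projHasF 0 x)).add h2').sub (projHasF 1 x)).add h3').sub hW).const_mul
      (1/2)).add (hf'.const_mul (1/2))

lemma pd_uu (j : Fin 2) {x : Fin 2 → ℝ} (hx : x ∈ simplex2) : pd j uu x = PP j x := by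
  rw [pd, (hasFDerivAt_uu hx).fderiv]
  unfold PP
  fin_cases j
  · simp only [e, ContinuousLinearMap.add_apply, ContinuousLinearMap.smul_apply,
      ContinuousLinearMap.sub_apply, ContinuousLinearMap.zero_apply,
      ContinuousLinearMap.proj_apply, smul_eq_mul, Pi.single_apply]
    norm_num
    ring
  · simp only [e, ContinuousLinearMap.add_apply, ContinuousLinearMap.smul_apply,
      ContinuousLinearMap.sub_apply, ContinuousLinearMap.zero_apply,
      ContinuousLinearMap.proj_apply, smul_eq_mul, Pi.single_apply]
    norm_num
    ring

lemma hasFDerivAt_PP (j : Fin 2) {y : Fin 2 → ℝ} (hy : y ∈ simplex2) :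
    HasFDerivAt (PP j)
      ((1/2 : ℝ) • (((y j)⁻¹ • e j
          - (1 - y 0 - y 1)⁻¹ • ((0 : (Fin 2 → ℝ) →L[ℝ] ℝ) - e 0 - e 1))
          + hh (y 0 + y 1) • (e 0 + e 1))) y := by
  obtain ⟨h0, h1, hs⟩ := hy
  have hw : (0:ℝ) < 1 - y 0 - y 1 := by linarith
  have hj : 0 < y j := by fin_cases j <;> simpa
  have hW : HasFDerivAt (fun z : Fin 2 → ℝ => 1 - z 0 - z 1)
      ((0 : (Fin 2 → ℝ) →L[ℝ] ℝ) - e 0 - e 1) y :=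
    ((hasFDerivAt_const (1:ℝ) y).sub (projHasF 0 y)).sub (projHasF 1 y)
  have hS : HasFDerivAt (fun z : Fin 2 → ℝ => z 0 + z 1) (e 0 + e 1) y :=
    (projHasF 0 y).add (projHasF 1 y)
  have hl1 : HasFDerivAt (fun z : Fin 2 → ℝ => Real.log (z j)) ((y j)⁻¹ • e j) y :=
    by have := (Real.hasDerivAt_log hj.ne').comp_hasFDerivAt y (projHasF j y); exact this
  have hl2 : HasFDerivAt (fun z : Fin 2 → ℝ => Real.log (1 - z 0 - z 1))
      ((1 - y 0 - y 1)⁻¹ • ((0 : (Fin 2 → ℝ) →L[ℝ] ℝ) - e 0 - e 1)) y :=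
    by have := (Real.hasDerivAt_log hw.ne').comp_hasFDerivAt y hW; exact this
  have hl3 : HasFDerivAt (fun z : Fin 2 → ℝ => HH (z 0 + z 1))
      (hh (y 0 + y 1) • (e 0 + e 1)) y :=
    by have := (hasDerivAt_HH (y 0 + y 1)).comp_hasFDerivAt y hS; exact this
  exact ((hl1.sub hl2).add hl3).const_mul (1/2)

/-- The local expression for the Hessian determinant near the diagonal segment. -/
noncomputable def DD : (Fin 2 → ℝ) → ℝ := fun y =>
  4⁻¹ * ((y 0)⁻¹ * (y 1)⁻¹ + ((y 0 + y 1) - (y 0 + y 1)⁻¹) * ((y 0)⁻¹ + (y 1)⁻¹))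

lemma fderiv_pd (j : Fin 2) {y : Fin 2 → ℝ} (hy : y ∈ simplex2) :
    fderiv ℝ (pd j uu) y =
      ((1/2 : ℝ) • (((y j)⁻¹ • e j
          - (1 - y 0 - y 1)⁻¹ • ((0 : (Fin 2 → ℝ) →L[ℝ] ℝ) - e 0 - e 1))
          + hh (y 0 + y 1) • (e 0 + e 1))) := by
  have hev : pd j uu =ᶠ[𝓝 y] PP j :=
    Filter.eventuallyEq_of_mem (open_simplex.mem_nhds hy) (fun z hz => pd_uu j hz)
  rw [hev.fderiv_eq, (hasFDerivAt_PP j hy).fderiv]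

lemma det_eq {y : Fin 2 → ℝ} (hy : y ∈ simplex2)
    (hmid : y 0 + y 1 ∈ Ioo (3/10 : ℝ) (7/10)) :
    (Hess uu y).det = DD y := by
  have hq : hh (y 0 + y 1)
      = (y 0 + y 1) - (y 0 + y 1)⁻¹ - (1 - (y 0 + y 1))⁻¹ := by
    unfold hh
    rw [phi_eq_one hmid.1.le hmid.2.le, one_mul]
  have hsub : (1 : ℝ) - (y 0 + y 1) = 1 - y 0 - y 1 := by ring
  rw [hsub] at hq
  have entry : ∀ i j : Fin 2, Hess uu y i j =
      (1/2 : ℝ) * ((y j)⁻¹ * ((Pi.single i 1 : Fin 2 → ℝ) j)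
        - (1 - y 0 - y 1)⁻¹ * ((0:ℝ) - (Pi.single i 1 : Fin 2 → ℝ) 0 - (Pi.single i 1 : Fin 2 → ℝ) 1)
        + hh (y 0 + y 1) * ((Pi.single i 1 : Fin 2 → ℝ) 0 + (Pi.single i 1 : Fin 2 → ℝ) 1)) := by
    intro i j
    show pd i (pd j uu) y = _
    rw [pd, fderiv_pd j hy]
    simp [e, ContinuousLinearMap.proj_apply]
    ring
  rw [Matrix.det_fin_two]
  rw [entry 0 0, entry 1 1, entry 0 1, entry 1 0, hq]
  unfold DD
  simp [Pi.single_apply]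
  ring

lemma hasFDerivAt_DD_zero {t : ℝ} (h3 : 1/3 ≤ t) (h6 : t ≤ 2/3) :
    HasFDerivAt DD (0 : (Fin 2 → ℝ) →L[ℝ] ℝ) (![t/2, t/2] : Fin 2 → ℝ) := by
  set x : Fin 2 → ℝ := ![t/2, t/2] with hxdef
  have hx0 : x 0 = t/2 := rfl
  have hx1 : x 1 = t/2 := rfl
  have ht0 : t ≠ 0 := by intro hc; rw [hc] at h3; norm_num at h3
  have hx0ne : x 0 ≠ 0 := by rw [hx0]; intro hc; apply ht0; linarith [hc]
  have hx1ne : x 1 ≠ 0 := by rw [hx1]; intro hc; apply ht0; linarith [hc]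
  have hsne : x 0 + x 1 ≠ 0 := by rw [hx0, hx1]; intro hc; apply ht0; linarith [hc]
  have hI0 : HasFDerivAt (fun y : Fin 2 → ℝ => (y 0)⁻¹) ((-((x 0)^2)⁻¹) • e 0) x :=
    (hasDerivAt_inv hx0ne).comp_hasFDerivAt x (projHasF 0 x)
  have hI1 : HasFDerivAt (fun y : Fin 2 → ℝ => (y 1)⁻¹) ((-((x 1)^2)⁻¹) • e 1) x :=
    (hasDerivAt_inv hx1ne).comp_hasFDerivAt x (projHasF 1 x)
  have hS : HasFDerivAt (fun z : Fin 2 → ℝ => z 0 + z 1) (e 0 + e 1) x :=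
    (projHasF 0 x).add (projHasF 1 x)
  have hIS : HasFDerivAt (fun y : Fin 2 → ℝ => (y 0 + y 1)⁻¹)
      ((-((x 0 + x 1)^2)⁻¹) • (e 0 + e 1)) x :=
    (hasDerivAt_inv hsne).comp_hasFDerivAt x hS
  have htot : HasFDerivAt DD
      ((4⁻¹ : ℝ) • (((x 0)⁻¹ • ((-((x 1)^2)⁻¹) • e 1) + (x 1)⁻¹ • ((-((x 0)^2)⁻¹) • e 0))
        + ((x 0 + x 1 - (x 0 + x 1)⁻¹) • ((-((x 0)^2)⁻¹) • e 0 + (-((x 1)^2)⁻¹) • e 1)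
          + ((x 0)⁻¹ + (x 1)⁻¹) • ((e 0 + e 1) - (-((x 0 + x 1)^2)⁻¹) • (e 0 + e 1))))) x :=
    ((hI0.mul hI1).add ((hS.sub hIS).mul (hI0.add hI1))).const_mul (4⁻¹ : ℝ)
  have hzero : ((4⁻¹ : ℝ) • (((x 0)⁻¹ • ((-((x 1)^2)⁻¹) • e 1) + (x 1)⁻¹ • ((-((x 0)^2)⁻¹) • e 0))
        + ((x 0 + x 1 - (x 0 + x 1)⁻¹) • ((-((x 0)^2)⁻¹) • e 0 + (-((x 1)^2)⁻¹) • e 1)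
          + ((x 0)⁻¹ + (x 1)⁻¹) • ((e 0 + e 1) - (-((x 0 + x 1)^2)⁻¹) • (e 0 + e 1)))))
      = (0 : (Fin 2 → ℝ) →L[ℝ] ℝ) := by
    ext v
    simp only [ContinuousLinearMap.smul_apply, ContinuousLinearMap.add_apply,
      ContinuousLinearMap.sub_apply, ContinuousLinearMap.zero_apply, e,
      ContinuousLinearMap.proj_apply, smul_eq_mul, hx0, hx1]
    have h2 : t/2 ≠ 0 := fun hc => ht0 (by linarith [hc])
    field_simp
    ring
  rw [hzero] at htot
  exact htot

end Stmt13Aux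

open Stmt13Aux in
theorem stmt13 :
    ∃ (f : ℝ → ℝ) (U : Set ℝ), IsOpen U ∧ Icc (0:ℝ) 1 ⊆ U ∧
      ContDiffOn ℝ (⊤ : ℕ∞) f U ∧
      (∀ t ∈ Ioo (0:ℝ) 1, 0 < 1 + t * (1 - t) * deriv (deriv f) t) ∧
      ∀ t ∈ Icc (1/3 : ℝ) (2/3),
        (![t/2, t/2] : Fin 2 → ℝ) ∈ simplex2 ∧
        fderiv ℝ
          (fun y => (Hess (fun z => uGCP2 z + (1/2) * f (z 0 + z 1)) y).det)
          ![t/2, t/2] = 0 := by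
  refine ⟨ff, Set.univ, isOpen_univ, subset_univ _, contDiff_ff.contDiffOn, ?_, ?_⟩
  · intro t ht
    rw [deriv_ff, deriv_HH]
    exact pos_cond ht.1 ht.2
  · intro t ht
    obtain ⟨h3, h6⟩ := ht
    have hmem : (![t/2, t/2] : Fin 2 → ℝ) ∈ simplex2 := by
      refine ⟨?_, ?_, ?_⟩ <;> simp [Matrix.cons_val_zero, Matrix.cons_val_one] <;> linarith
    refine ⟨hmem, ?_⟩
    have hVopen : IsOpen (simplex2 ∩ (fun y : Fin 2 → ℝ => y 0 + y 1) ⁻¹' Ioo (3/10 : ℝ) (7/10)) :=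
      open_simplex.inter (isOpen_Ioo.preimage ((continuous_apply 0).add (continuous_apply 1)))
    have hxV : (![t/2, t/2] : Fin 2 → ℝ) ∈
        simplex2 ∩ (fun y : Fin 2 → ℝ => y 0 + y 1) ⁻¹' Ioo (3/10 : ℝ) (7/10) := by
      refine ⟨hmem, ?_⟩
      show t/2 + t/2 ∈ Ioo (3/10 : ℝ) (7/10)
      constructor <;> linarith
    have hev : (fun y => (Hess uu y).det) =ᶠ[𝓝 (![t/2, t/2] : Fin 2 → ℝ)] DD :=
      Filter.eventuallyEq_of_mem (hVopen.mem_nhds hxV) (fun y hy => det_eq hy.1 hy.2)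
    show fderiv ℝ (fun y => (Hess uu y).det) ![t/2, t/2] = 0
    rw [hev.fderiv_eq, (hasFDerivAt_DD_zero h3 h6).fderiv]
end
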